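/- arXiv:1206.3220 — 6 statements merged into one kernel-verified Lean document; each statement's English description precedes it below -/
import Mathlib

section
/- Fix i ∈ I and n ∈ ℕ. Then the random variable L^i_{ζ_n} := Y_{ζ_n} S^i_{ζ_n} / S^i_0 is P-a.s. nonnegative with E_P[L^i_{ζ_n}] = 1, and any probability measure Q satisfying the valuation identity for asset i satisfies: (a) Q restricted to F_0 coincides with P restricted to F_0, and (b) for every s ≥ 0 and every A ∈ F_s, Q[A ∩ {s < ζ_n}] = E_P[L^i_{ζ_n} 1_A ; s < ζ_n]. In particular, Q restricted to F_{ζ_n−} is the measure with density L^i_{ζ_n} with respect to P, where F_{τ−} denotes the σ-algebra generated by F_0 together with all sets of the form A ∩ {s < τ} with s ≥ 0 and A ∈ F_s. -/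
open MeasureTheory Filter Set
open scoped NNReal ENNReal

noncomputable section

namespace ExchangeOptions

variable {Ω : Type*} {m : MeasurableSpace Ω}

/-- An extended (possibly infinite-valued) stopping time for the filtration `F`. -/
def IsExtStoppingTime (F : Filtration ℝ≥0 m) (τ : Ω → ℝ≥0∞) : Prop :=
  ∀ t : ℝ≥0, MeasurableSet[F t] {ω | τ ω ≤ (t : ℝ≥0∞)}

/-- The σ-algebra `F_τ` at an extended stopping time `τ`. -/
def IsExtStoppingTime.measurableSpace {F : Filtration ℝ≥0 m} {τ : Ω → ℝ≥0∞}
    (hτ : IsExtStoppingTime F τ) : MeasurableSpace Ω where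
  MeasurableSet' A := ∀ t : ℝ≥0, MeasurableSet[F t] (A ∩ {ω | τ ω ≤ (t : ℝ≥0∞)})
  measurableSet_empty := fun t => by simp
  measurableSet_compl := fun A hA t => by
    have h : Aᶜ ∩ {ω | τ ω ≤ (t : ℝ≥0∞)} =
        {ω | τ ω ≤ (t : ℝ≥0∞)} \ (A ∩ {ω | τ ω ≤ (t : ℝ≥0∞)}) := by
      ext ω; by_cases h : ω ∈ A <;> simp [h]
    rw [h]
    exact (hτ t).diff (hA t)
  measurableSet_iUnion := fun s hs t => by
    rw [Set.iUnion_inter]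
    exact MeasurableSet.iUnion fun n => hs n t

/-- The σ-algebra `F_{τ-}`, generated by `F_0` together with all sets
`A ∩ {s < τ}` where `s : ℝ≥0` and `A ∈ F_s`. -/
def sigmaPre (F : Filtration ℝ≥0 m) (τ : Ω → ℝ≥0∞) : MeasurableSpace Ω :=
  (F 0 : MeasurableSpace Ω) ⊔ MeasurableSpace.generateFrom
    {B | ∃ (s : ℝ≥0) (A : Set Ω), MeasurableSet[F s] A ∧ B = A ∩ {ω | (s : ℝ≥0∞) < τ ω}}

/-- Evaluation of a process at an extended stopping time (junk value at `∞`). -/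
def ev (X : ℝ≥0 → Ω → ℝ) (τ : Ω → ℝ≥0∞) (ω : Ω) : ℝ := X (τ ω).toNNReal ω

/-- The underlying financial model, together with the standing assumptions:
nonnegative adapted assets `S i` vanishing from the default time `ζ` onwards, with
strictly positive a.s.-constant initial values `S0 i`; a nonnegative stochastic discount
factor `Y` with `Y_0 = 1` a.s.; and a sequence `ζn` of stopping times nicely approximating
the default time such that every stopped process `(Y_{ζn ∧ t} S^i_{ζn ∧ t})_t` is a
`P`-a.s. càdlàg martingale.  The probability `P` lives on `F_∞ = ⨆ t, F t`. -/
structure Model (ι : Type*) {Ω : Type*} {m : MeasurableSpace Ω}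
    (F : Filtration ℝ≥0 m) (P : Measure Ω) where
  S : ι → ℝ≥0 → Ω → ℝ
  Y : ℝ≥0 → Ω → ℝ
  S0 : ι → ℝ
  ζ : Ω → ℝ≥0∞
  ζn : ℕ → Ω → ℝ≥0
  nonempty : Nonempty ι
  hFinf : (⨆ t : ℝ≥0, (F t : MeasurableSpace Ω)) = m
  hP : IsProbabilityMeasure P
  hζ : IsExtStoppingTime F ζ
  S_nonneg : ∀ i t ω, 0 ≤ S i t ω
  S_adapted : ∀ i, Adapted F (S i)
  S_default : ∀ i (t : ℝ≥0) ω, ζ ω ≤ (t : ℝ≥0∞) → S i t ω = 0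
  S0_pos : ∀ i, 0 < S0 i
  S0_eq : ∀ i, ∀ᵐ ω ∂P, S i 0 ω = S0 i
  Y_nonneg : ∀ t ω, 0 ≤ Y t ω
  Y0 : ∀ᵐ ω ∂P, Y 0 ω = 1
  ζn_stop : ∀ n, IsStoppingTime F (fun ω => ((ζn n ω : ℝ≥0) : WithTop ℝ≥0))
  ζn_mono : ∀ ω, Monotone fun n => ζn n ω
  ζn_le : ∀ (n : ℕ) ω, ζn n ω ≤ (n : ℝ≥0)
  ζn_tendsto : ∀ ω, Tendsto (fun n => (ζn n ω : ℝ≥0∞)) atTop (nhds (ζ ω))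
  mart : ∀ (n : ℕ) (i : ι),
    Martingale (fun t ω => Y (min (ζn n ω) t) ω * S i (min (ζn n ω) t) ω) F P
  cadlag : ∀ (n : ℕ) (i : ι), ∀ᵐ ω ∂P,
    (∀ t : ℝ≥0, ContinuousWithinAt
      (fun s => Y (min (ζn n ω) s) ω * S i (min (ζn n ω) s) ω) (Set.Ici t) t) ∧
    (∀ t : ℝ≥0, 0 < t → ∃ l : ℝ, Tendsto
      (fun s => Y (min (ζn n ω) s) ω * S i (min (ζn n ω) s) ω)
      (nhdsWithin t (Set.Iio t)) (nhds l))

variable {ι : Type*} {F : Filtration ℝ≥0 m} {P : Measure Ω}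

/-- `Q` satisfies the valuation identity for asset `i`:  `Q` is a probability and, for every
extended stopping time `T` and nonnegative `F_T`-measurable `ξ`,
`E_P[Y_T S^i_T ξ ; T < ζ] = S^i_0 E_Q[ξ ; T < ζ]`. -/
def Model.ValId (M : Model ι F P) (i : ι) (Q : Measure Ω) : Prop :=
  IsProbabilityMeasure Q ∧
  ∀ (T : Ω → ℝ≥0∞) (hT : IsExtStoppingTime F T) (ξ : Ω → ℝ≥0∞),
    Measurable[hT.measurableSpace] ξ →
    ∫⁻ ω in {ω | T ω < M.ζ ω}, ENNReal.ofReal (ev M.Y T ω * ev (M.S i) T ω) * ξ ω ∂P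
      = ENNReal.ofReal (M.S0 i) * ∫⁻ ω in {ω | T ω < M.ζ ω}, ξ ω ∂Q

/-- The asset-price ratio process `R^{ij} = (S^i / S^j) 1_{S^j > 0}`. -/
def Model.R (M : Model ι F P) (i j : ι) (t : ℝ≥0) (ω : Ω) : ℝ :=
  if 0 < M.S j t ω then M.S i t ω / M.S j t ω else 0

/-- `ρ^{ij} = liminf_n R^{ij}_{ζ_n}` (computed in `ℝ≥0∞`). -/
def Model.rho (M : Model ι F P) (i j : ι) (ω : Ω) : ℝ≥0∞ :=
  Filter.liminf (fun n => ENNReal.ofReal (M.R i j (M.ζn n ω) ω)) atTop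

/-- The value `EX^{ij}(T) = E_P[Y_T (S^j_T − S^i_T)_+ ; T < ζ]` of the European option to
exchange asset `i` for asset `j` at time `T`. -/
def Model.EX (M : Model ι F P) (i j : ι) (T : Ω → ℝ≥0∞) : ℝ≥0∞ :=
  ∫⁻ ω in {ω | T ω < M.ζ ω},
    ENNReal.ofReal (ev M.Y T ω * max (ev (M.S j) T ω - ev (M.S i) T ω) 0) ∂P

/-- The value `AX^{ij}(T) = sup_{τ ≤ T} EX^{ij}(τ)` of the American option to exchange
asset `i` for asset `j` up to time `T`; the supremum is over stopping times `τ ≤ T`. -/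
def Model.AX (M : Model ι F P) (i j : ι) (T : Ω → ℝ≥0∞) : ℝ≥0∞ :=
  ⨆ (τ : Ω → ℝ≥0∞) (_ : IsExtStoppingTime F τ) (_ : ∀ ω, τ ω ≤ T ω), M.EX i j τ


section Aux

variable {ι : Type*} {F : Filtration ℝ≥0 m} {P : Measure Ω}

/-- The random variable `Y_{ζ_n} S^i_{ζ_n}`. -/
def Model.fn (M : Model ι F P) (i : ι) (n : ℕ) (ω : Ω) : ℝ :=
  M.Y (M.ζn n ω) ω * M.S i (M.ζn n ω) ω

lemma fn_nonneg (M : Model ι F P) (i : ι) (n : ℕ) (ω : Ω) : 0 ≤ M.fn i n ω :=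
  mul_nonneg (M.Y_nonneg _ _) (M.S_nonneg _ _ _)

lemma fn_integrable (M : Model ι F P) (i : ι) (n : ℕ) : Integrable (M.fn i n) P := by
  have h := (M.mart n i).integrable (n : ℝ≥0)
  refine h.congr (Filter.Eventually.of_forall fun ω => ?_)
  simp only [Model.fn, min_eq_left (M.ζn_le n ω)]

lemma setIntegral_fn (M : Model ι F P) (i : ι) (n : ℕ) {B : Set Ω}
    (hB : MeasurableSet[F 0] B) :
    ∫ ω in B, M.fn i n ω ∂P = M.S0 i * (P B).toReal := by
  haveI := M.hP
  have h := Martingale.setIntegral_eq (M.mart n i) (zero_le : (0 : ℝ≥0) ≤ (n : ℝ≥0)) hB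
  have h1 : ∫ ω in B, M.fn i n ω ∂P
      = ∫ ω in B, M.Y (min (M.ζn n ω) (n : ℝ≥0)) ω * M.S i (min (M.ζn n ω) (n : ℝ≥0)) ω ∂P :=
    integral_congr_ae (Filter.Eventually.of_forall fun ω => by
      simp only [Model.fn, min_eq_left (M.ζn_le n ω)])
  have h2 : ∫ ω in B, M.Y (min (M.ζn n ω) (0 : ℝ≥0)) ω * M.S i (min (M.ζn n ω) (0 : ℝ≥0)) ω ∂P
      = ∫ ω in B, (M.S0 i : ℝ) ∂P := by
    refine integral_congr_ae (ae_restrict_of_ae ?_)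
    filter_upwards [M.Y0, M.S0_eq i] with ω hY hS
    rw [min_eq_right zero_le, hY, hS, one_mul]
  rw [h1, ← h, h2, setIntegral_const, smul_eq_mul, mul_comm]
  rfl

lemma setLIntegral_fn (M : Model ι F P) (i : ι) (n : ℕ) {B : Set Ω}
    (hB : MeasurableSet[F 0] B) :
    ∫⁻ ω in B, ENNReal.ofReal (M.fn i n ω) ∂P = ENNReal.ofReal (M.S0 i) * P B := by
  haveI := M.hP
  rw [← ofReal_integral_eq_lintegral_ofReal ((fn_integrable M i n).integrableOn)
    (ae_restrict_of_ae (Filter.Eventually.of_forall (fn_nonneg M i n))),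
    setIntegral_fn M i n hB, ENNReal.ofReal_mul (le_of_lt (M.S0_pos i)),
    ENNReal.ofReal_toReal (measure_ne_top P B)]

lemma lintegral_fn (M : Model ι F P) (i : ι) (n : ℕ) :
    ∫⁻ ω, ENNReal.ofReal (M.fn i n ω) ∂P = ENNReal.ofReal (M.S0 i) := by
  haveI := M.hP
  have := setLIntegral_fn M i n (B := Set.univ) MeasurableSet.univ
  rwa [Measure.restrict_univ, measure_univ, mul_one] at this

lemma meas_zeta (M : Model ι F P) : Measurable M.ζ := by
  apply measurable_of_Iic
  intro x
  induction x using ENNReal.recTopCoe with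
  | top => simp
  | coe t => exact F.le t _ (M.hζ t)

lemma zn_meas (M : Model ι F P) (n : ℕ) (t : ℝ≥0) :
    MeasurableSet[F t] {ω | M.ζn n ω ≤ t} := by
  have := (M.ζn_stop n) t
  simpa only [WithTop.coe_le_coe] using this

lemma meas_zetan (M : Model ι F P) (n : ℕ) :
    Measurable fun ω => (M.ζn n ω : ℝ≥0∞) :=
  (measurable_of_Iic fun t => F.le t _ (zn_meas M n t)).coe_nnreal_ennreal

lemma meas_E (M : Model ι F P) (n : ℕ) :
    MeasurableSet {ω | (M.ζn n ω : ℝ≥0∞) < M.ζ ω} :=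
  measurableSet_lt (meas_zetan M n) (meas_zeta M)

end Aux

section Aux2

variable {ι : Type*} {F : Filtration ℝ≥0 m} {P : Measure Ω}

lemma key (M : Model ι F P) (i : ι) (n : ℕ) {Q : Measure Ω} (hQ : M.ValId i Q) (D : Set Ω)
    (hD : ∀ t : ℝ≥0, MeasurableSet[F t] (D ∩ {ω | M.ζn n ω ≤ t})) :
    ENNReal.ofReal (M.S0 i) * Q (D ∩ {ω | (M.ζn n ω : ℝ≥0∞) < M.ζ ω})
      = ∫⁻ ω in D, ENNReal.ofReal (M.fn i n ω) ∂P := by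
  classical
  set E : Set Ω := {ω | (M.ζn n ω : ℝ≥0∞) < M.ζ ω} with hEdef
  have hE : MeasurableSet E := meas_E M n
  have hDm : MeasurableSet D := by
    have h := F.le n _ (hD n)
    have hDeq : D ∩ {ω | M.ζn n ω ≤ (n : ℝ≥0)} = D := by
      ext ω; simp [M.ζn_le n ω]
    rwa [hDeq] at h
  set T : Ω → ℝ≥0∞ := fun ω => if ω ∈ D then (M.ζn n ω : ℝ≥0∞) else ∞ with hTdef
  have hT : IsExtStoppingTime F T := by
    intro t
    have hset : {ω | T ω ≤ (t : ℝ≥0∞)} = D ∩ {ω | M.ζn n ω ≤ t} := by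
      ext ω
      by_cases h : ω ∈ D <;>
        simp [T, h, ENNReal.coe_le_coe]
    rw [hset]; exact hD t
  have hset : {ω | T ω < M.ζ ω} = D ∩ E := by
    ext ω
    by_cases h : ω ∈ D
    · simp [T, h, hEdef]
    · simp only [T, h, if_false, Set.mem_setOf_eq, Set.mem_inter_iff]
      exact iff_of_false not_top_lt (fun hc => hc.1)
  have hval := hQ.2 T hT (fun _ => 1) (@measurable_const _ _ _ hT.measurableSpace _)
  rw [hset] at hval
  -- simplify the Q side
  rw [setLIntegral_one] at hval
  -- simplify the P side integrand on `D ∩ E`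
  have hcong : ∫⁻ ω in D ∩ E, ENNReal.ofReal (ev M.Y T ω * ev (M.S i) T ω) * (fun _ => (1:ℝ≥0∞)) ω ∂P
      = ∫⁻ ω in D ∩ E, ENNReal.ofReal (M.fn i n ω) ∂P := by
    refine setLIntegral_congr_fun (hDm.inter hE) (fun ω hω => ?_)
    have hTω : T ω = (M.ζn n ω : ℝ≥0∞) := if_pos hω.1
    simp only [ev, hTω, ENNReal.toNNReal_coe, mul_one, Model.fn]
  rw [hcong] at hval
  -- extend the integral from `D ∩ E` to `D`
  have hzero : ∫⁻ ω in D ∩ Eᶜ, ENNReal.ofReal (M.fn i n ω) ∂P = 0 := by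
    have : ∫⁻ ω in D ∩ Eᶜ, ENNReal.ofReal (M.fn i n ω) ∂P
        = ∫⁻ _ω in D ∩ Eᶜ, (0 : ℝ≥0∞) ∂P := by
      refine setLIntegral_congr_fun (hDm.inter hE.compl)
        (fun ω hω => ?_)
      have hζ : M.ζ ω ≤ (M.ζn n ω : ℝ≥0∞) := not_lt.1 hω.2
      rw [Model.fn, M.S_default i _ ω hζ, mul_zero, ENNReal.ofReal_zero]
    rw [this, lintegral_zero]
  have hsplit : ∫⁻ ω in D, ENNReal.ofReal (M.fn i n ω) ∂P
      = ∫⁻ ω in D ∩ E, ENNReal.ofReal (M.fn i n ω) ∂P := by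
    have h1 := lintegral_add_compl (fun ω => ENNReal.ofReal (M.fn i n ω)) hE (μ := P.restrict D)
    rw [Measure.restrict_restrict hE, Measure.restrict_restrict hE.compl, Set.inter_comm E D,
      Set.inter_comm Eᶜ D, hzero, add_zero] at h1
    exact h1.symm
  rw [← hval, hsplit]

end Aux2

section Aux3

variable {ι : Type*} {F : Filtration ℝ≥0 m} {P : Measure Ω}

lemma ofRealS0_ne_zero (M : Model ι F P) (i : ι) : ENNReal.ofReal (M.S0 i) ≠ 0 :=
  (ENNReal.ofReal_pos.2 (M.S0_pos i)).ne'

lemma Q_livens (M : Model ι F P) (i : ι) (n : ℕ) {Q : Measure Ω} (hQ : M.ValId i Q) :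
    Q {ω | (M.ζn n ω : ℝ≥0∞) < M.ζ ω} = 1 := by
  haveI := M.hP
  have h := key M i n hQ Set.univ (fun t => by
    simpa using (zn_meas M n t))
  rw [Set.univ_inter, Measure.restrict_univ, lintegral_fn M i n] at h
  nth_rewrite 2 [← mul_one (ENNReal.ofReal (M.S0 i))] at h
  exact (ENNReal.mul_right_inj (ofRealS0_ne_zero M i) ENNReal.ofReal_ne_top).1 h

lemma Q_conull (M : Model ι F P) (i : ι) (n : ℕ) {Q : Measure Ω} (hQ : M.ValId i Q) :
    Q {ω | (M.ζn n ω : ℝ≥0∞) < M.ζ ω}ᶜ = 0 := by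
  haveI := hQ.1
  rw [measure_compl (meas_E M n) (measure_ne_top Q _), Q_livens M i n hQ, measure_univ,
    tsub_self]

lemma claim_b (M : Model ι F P) (i : ι) (n : ℕ) {Q : Measure Ω} (hQ : M.ValId i Q)
    (s : ℝ≥0) (A : Set Ω) (hA : MeasurableSet[F s] A) :
    ENNReal.ofReal (M.S0 i) * Q (A ∩ {ω | s < M.ζn n ω})
      = ∫⁻ ω in A ∩ {ω | s < M.ζn n ω}, ENNReal.ofReal (M.fn i n ω) ∂P := by
  have hD : ∀ t : ℝ≥0, MeasurableSet[F t] ((A ∩ {ω | s < M.ζn n ω}) ∩ {ω | M.ζn n ω ≤ t}) := by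
    intro t
    by_cases hst : s ≤ t
    · have hA' : MeasurableSet[F t] A := F.mono hst _ hA
      have h1 : MeasurableSet[F t] {ω | s < M.ζn n ω} := by
        have := (zn_meas M n s).compl
        have h2 : {ω | M.ζn n ω ≤ s}ᶜ = {ω | s < M.ζn n ω} := by
          ext ω; simp [not_le]
        rw [h2] at this
        exact F.mono hst _ this
      exact (hA'.inter h1).inter (zn_meas M n t)
    · have : (A ∩ {ω | s < M.ζn n ω}) ∩ {ω | M.ζn n ω ≤ t} = ∅ := by
        ext ω
        simp only [Set.mem_inter_iff, Set.mem_setOf_eq, Set.mem_empty_iff_false, iff_false]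
        rintro ⟨⟨-, h1⟩, h2⟩
        exact hst (le_of_lt (lt_of_lt_of_le h1 h2))
      rw [this]; exact @MeasurableSet.empty Ω (F t)
  have h := key M i n hQ (A ∩ {ω | s < M.ζn n ω}) hD
  rwa [measure_inter_conull (Q_conull M i n hQ)] at h

lemma claim_a (M : Model ι F P) (i : ι) (n : ℕ) {Q : Measure Ω} (hQ : M.ValId i Q)
    (A : Set Ω) (hA : MeasurableSet[F 0] A) : Q A = P A := by
  classical
  haveI := M.hP
  haveI := hQ.1
  set T : Ω → ℝ≥0∞ := fun ω => if ω ∈ A then 0 else ∞ with hTdef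
  have hT : IsExtStoppingTime F T := by
    intro t
    have hset : {ω | T ω ≤ (t : ℝ≥0∞)} = A := by
      ext ω; by_cases h : ω ∈ A <;> simp [T, h]
    rw [hset]; exact F.mono (zero_le : (0 : ℝ≥0) ≤ t) _ hA
  have hset : {ω | T ω < M.ζ ω} = A ∩ {ω | 0 < M.ζ ω} := by
    ext ω
    by_cases h : ω ∈ A
    · simp [T, h]
    · simp only [T, h, if_false, Set.mem_setOf_eq, Set.mem_inter_iff]
      exact iff_of_false not_top_lt (fun hc => hc.1)
  have hval := hQ.2 T hT (fun _ => 1) (@measurable_const _ _ _ hT.measurableSpace _)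
  rw [hset, setLIntegral_one] at hval
  have hcong : ∫⁻ ω in A ∩ {ω | 0 < M.ζ ω},
        ENNReal.ofReal (ev M.Y T ω * ev (M.S i) T ω) * (fun _ => (1:ℝ≥0∞)) ω ∂P
      = ∫⁻ _ω in A ∩ {ω | 0 < M.ζ ω}, ENNReal.ofReal (M.S0 i) ∂P := by
    refine lintegral_congr_ae (ae_restrict_of_ae ?_)
    filter_upwards [M.Y0, M.S0_eq i] with ω hY hS
    have hTω : (T ω).toNNReal = 0 := by by_cases h : ω ∈ A <;> simp [T, h]
    simp only [ev, hTω, mul_one, hY, hS, one_mul]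
  rw [hcong, lintegral_const, Measure.restrict_apply_univ] at hval
  have hPnull : P {ω | (0:ℝ≥0∞) < M.ζ ω}ᶜ = 0 := by
    refine measure_mono_null ?_ (ae_iff.1 (M.S0_eq i))
    intro ω hω
    simp only [Set.mem_compl_iff, Set.mem_setOf_eq, not_lt, le_zero_iff] at hω
    have hζ : M.ζ ω ≤ ((0 : ℝ≥0) : ℝ≥0∞) := by simp [hω]
    have hS0 := M.S_default i 0 ω hζ
    simp only [Set.mem_setOf_eq, hS0]
    exact (M.S0_pos i).ne
  have hQnull : Q {ω | (0:ℝ≥0∞) < M.ζ ω}ᶜ = 0 := by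
    refine measure_mono_null ?_ (Q_conull M i n hQ)
    intro ω hω
    simp only [Set.mem_compl_iff, Set.mem_setOf_eq, not_lt, le_zero_iff] at hω ⊢
    simp [hω]
  have hcan := (ENNReal.mul_right_inj (ofRealS0_ne_zero M i) ENNReal.ofReal_ne_top).1 hval
  calc Q A = Q (A ∩ {ω | 0 < M.ζ ω}) := (measure_inter_conull hQnull).symm
    _ = P (A ∩ {ω | 0 < M.ζ ω}) := hcan.symm
    _ = P A := measure_inter_conull hPnull

end Aux3

section Aux4

variable {ι : Type*} {F : Filtration ℝ≥0 m} {P : Measure Ω}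

/-- The generating family for `sigmaPre`. -/
def genSet (F : Filtration ℝ≥0 m) (τ : Ω → ℝ≥0∞) : Set (Set Ω) :=
  {B | MeasurableSet[F 0] B} ∪
    {B | ∃ (s : ℝ≥0) (A : Set Ω), MeasurableSet[F s] A ∧ B = A ∩ {ω | (s : ℝ≥0∞) < τ ω}}

lemma sigmaPre_eq_generateFrom (F : Filtration ℝ≥0 m) (τ : Ω → ℝ≥0∞) :
    sigmaPre F τ = MeasurableSpace.generateFrom (genSet F τ) := by
  rw [sigmaPre, genSet, ← MeasurableSpace.generateFrom_sup_generateFrom]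
  congr 1
  exact (@MeasurableSpace.generateFrom_measurableSet Ω (F 0)).symm

lemma genSet_pi (F : Filtration ℝ≥0 m) (τ : Ω → ℝ≥0∞) : IsPiSystem (genSet F τ) := by
  rintro B1 (h1 | ⟨s1, A1, hA1, rfl⟩) B2 (h2 | ⟨s2, A2, hA2, rfl⟩) -
  · exact Or.inl (h1.inter h2)
  · exact Or.inr ⟨s2, B1 ∩ A2, (F.mono (zero_le : (0 : ℝ≥0) ≤ s2) _ h1).inter hA2,
      (Set.inter_assoc _ _ _).symm⟩
  · exact Or.inr ⟨s1, A1 ∩ B2, hA1.inter (F.mono (zero_le : (0 : ℝ≥0) ≤ s1) _ h2),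
      Set.inter_right_comm _ _ _⟩
  · refine Or.inr ⟨max s1 s2, A1 ∩ A2,
      MeasurableSet.inter (F.mono (le_max_left s1 s2) _ hA1)
        (F.mono (le_max_right s1 s2) _ hA2), ?_⟩
    ext ω
    simp only [Set.mem_inter_iff, Set.mem_setOf_eq, ENNReal.coe_max, max_lt_iff]
    tauto

lemma lintegral_ofReal_div (M : Model ι F P) (i : ι) (n : ℕ) (μ : Measure Ω) :
    ∫⁻ ω, ENNReal.ofReal (M.fn i n ω / M.S0 i) ∂μ
      = (∫⁻ ω, ENNReal.ofReal (M.fn i n ω) ∂μ) / ENNReal.ofReal (M.S0 i) := by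
  simp_rw [ENNReal.ofReal_div_of_pos (M.S0_pos i), div_eq_mul_inv]
  exact lintegral_mul_const' _ _ (ENNReal.inv_ne_top.2 (ofRealS0_ne_zero M i))

end Aux4


/-- Fix `i` and `n`.  The random variable
`L = Y_{ζ_n} S^i_{ζ_n} / S^i_0` is `P`-a.s. nonnegative with `E_P[L] = 1`, and any
probability `Q` satisfying the valuation identity for asset `i` coincides with `P` on `F_0`
and satisfies `Q[A ∩ {s < ζ_n}] = E_P[L 1_A ; s < ζ_n]` for every `s ≥ 0` and `A ∈ F_s`;
in particular, `Q` restricted to `F_{ζ_n-}` has density `L` with respect to `P`. -/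
theorem stmt0 {Ω ι : Type*} {m : MeasurableSpace Ω} {F : Filtration ℝ≥0 m} {P : Measure Ω}
    (M : Model ι F P) (i : ι) (n : ℕ) (L : Ω → ℝ)
    (hL : L = fun ω => M.Y (M.ζn n ω) ω * M.S i (M.ζn n ω) ω / M.S0 i) :
    (∀ᵐ ω ∂P, 0 ≤ L ω) ∧
    (∫⁻ ω, ENNReal.ofReal (L ω) ∂P = 1) ∧
    ∀ Q : Measure Ω, M.ValId i Q →
      (∀ A : Set Ω, MeasurableSet[F 0] A → Q A = P A) ∧
      (∀ (s : ℝ≥0) (A : Set Ω), MeasurableSet[F s] A →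
        Q (A ∩ {ω | s < M.ζn n ω}) =
          ∫⁻ ω in A ∩ {ω | s < M.ζn n ω}, ENNReal.ofReal (L ω) ∂P) ∧
      (∀ A : Set Ω, MeasurableSet[sigmaPre F (fun ω => (M.ζn n ω : ℝ≥0∞))] A →
        Q A = ∫⁻ ω in A, ENNReal.ofReal (L ω) ∂P) := by
  haveI := M.hP
  subst hL
  have hS0ne := ofRealS0_ne_zero M i
  have hS0top : ENNReal.ofReal (M.S0 i) ≠ ⊤ := ENNReal.ofReal_ne_top
  have hint : ∀ μ : Measure Ω,
      ∫⁻ ω, ENNReal.ofReal (M.fn i n ω / M.S0 i) ∂μ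
        = (∫⁻ ω, ENNReal.ofReal (M.fn i n ω) ∂μ) / ENNReal.ofReal (M.S0 i) :=
    lintegral_ofReal_div M i n
  have htotal : ∫⁻ ω, ENNReal.ofReal (M.fn i n ω / M.S0 i) ∂P = 1 := by
    rw [hint P, lintegral_fn M i n, ENNReal.div_self hS0ne hS0top]
  refine ⟨Filter.Eventually.of_forall fun ω =>
      div_nonneg (fn_nonneg M i n ω) (le_of_lt (M.S0_pos i)), htotal, ?_⟩
  intro Q hQ
  haveI := hQ.1
  have hb : ∀ (s : ℝ≥0) (A : Set Ω), MeasurableSet[F s] A →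
      Q (A ∩ {ω | s < M.ζn n ω}) =
        ∫⁻ ω in A ∩ {ω | s < M.ζn n ω}, ENNReal.ofReal (M.fn i n ω / M.S0 i) ∂P := by
    intro s A hA
    rw [hint (P.restrict _)]
    exact (ENNReal.eq_div_iff hS0ne hS0top).2 (claim_b M i n hQ s A hA)
  refine ⟨claim_a M i n hQ, hb, ?_⟩
  set τ : Ω → ℝ≥0∞ := fun ω => (M.ζn n ω : ℝ≥0∞) with hτdef
  set ν : Measure Ω := P.withDensity (fun ω => ENNReal.ofReal (M.fn i n ω / M.S0 i)) with hνdef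
  have hgen := sigmaPre_eq_generateFrom F τ
  have hle : sigmaPre F τ ≤ m := by
    rw [hgen]
    apply MeasurableSpace.generateFrom_le
    rintro B (hB | ⟨s, A', hA', rfl⟩)
    · exact F.le 0 _ hB
    · refine (F.le s _ hA').inter ?_
      have hseteq : {ω | (s : ℝ≥0∞) < τ ω} = {ω | M.ζn n ω ≤ s}ᶜ := by
        ext ω; simp [τ, not_le]
      rw [hseteq]
      exact (F.le s _ (zn_meas M n s)).compl
  intro A hA
  have hμν : ∀ B ∈ genSet F τ, Q B = ν B := by
    rintro B (hB | ⟨s, A', hA', rfl⟩)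
    · rw [claim_a M i n hQ B hB, hνdef, withDensity_apply _ (F.le 0 _ hB), hint (P.restrict B),
        setLIntegral_fn M i n hB]
      exact (ENNReal.eq_div_iff hS0ne hS0top).2 rfl
    · have hseteq : {ω | (s : ℝ≥0∞) < τ ω} = {ω | s < M.ζn n ω} := by
        ext ω; simp [τ]
      have hmeas : MeasurableSet (A' ∩ {ω | (s : ℝ≥0∞) < τ ω}) := by
        refine (F.le s _ hA').inter ?_
        rw [hseteq]
        have h2 : {ω | s < M.ζn n ω} = {ω | M.ζn n ω ≤ s}ᶜ := by ext ω; simp [not_le]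
        rw [h2]
        exact (F.le s _ (zn_meas M n s)).compl
      rw [hνdef, withDensity_apply _ hmeas, hseteq]
      exact hb s A' hA'
  have huniv : Q Set.univ = ν Set.univ := by
    rw [measure_univ, hνdef, withDensity_apply _ MeasurableSet.univ, Measure.restrict_univ,
      htotal]
  have h := MeasureTheory.ext_on_measurableSpace_of_generate_finite m (genSet F τ)
    hμν hle hgen (genSet_pi F τ) huniv hA
  rw [h, hνdef, withDensity_apply _ (hle _ hA)]
  rfl

end ExchangeOptions
end
end

section
/- Fix i ∈ I. If Q and Q' are two probability measures each satisfying the valuation identity for asset i, then Q and Q' coincide on the σ-algebra generated by ⋃_{n∈ℕ} F_{ζ_n−}, where F_{τ−} denotes the σ-algebra generated by F_0 together with all sets of the form A ∩ {s < τ} with s ≥ 0 and A ∈ F_s. -/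
open MeasureTheory Filter Set
open scoped NNReal ENNReal

noncomputable section

namespace ExchangeOptions

variable {Ω : Type*} {m : MeasurableSpace Ω}

variable {ι : Type*} {F : Filtration ℝ≥0 m} {P : Measure Ω}

section Aux

variable {ι' : Type*} {F' : Filtration ℝ≥0 m} {P' : Measure Ω}

lemma extMS_iff {F : Filtration ℝ≥0 m} {τ : Ω → ℝ≥0∞} (hτ : IsExtStoppingTime F τ)
    (B : Set Ω) :
    MeasurableSet[hτ.measurableSpace] B ↔
      ∀ t : ℝ≥0, MeasurableSet[F t] (B ∩ {ω | τ ω ≤ (t : ℝ≥0∞)}) :=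
  Iff.rfl

lemma Model.coe_zetan_le (M : Model ι' F' P') (n : ℕ) (ω : Ω) :
    (M.ζn n ω : ℝ≥0∞) ≤ M.ζ ω := by
  have hmono : Monotone fun k => (M.ζn k ω : ℝ≥0∞) := fun a b hab =>
    ENNReal.coe_le_coe.2 (M.ζn_mono ω hab)
  have heq : (⨆ k, (M.ζn k ω : ℝ≥0∞)) = M.ζ ω :=
    tendsto_nhds_unique (tendsto_atTop_iSup hmono) (M.ζn_tendsto ω)
  exact heq ▸ le_iSup (fun k => (M.ζn k ω : ℝ≥0∞)) n

/-- If both `Q` and `Q'` satisfy the valuation identity, they agree on any set `B` that is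
`F_T`-measurable for an extended stopping time `T` and satisfies `B ⊆ {T < ζ}`. -/
lemma Model.valId_agree (M : Model ι' F' P') (i : ι') {Q Q' : Measure Ω}
    (hQ : M.ValId i Q) (hQ' : M.ValId i Q') {T : Ω → ℝ≥0∞} (hT : IsExtStoppingTime F' T)
    {B : Set Ω} (hBm : MeasurableSet B)
    (hBT : MeasurableSet[hT.measurableSpace] B)
    (hBsub : B ⊆ {ω | T ω < M.ζ ω}) :
    Q B = Q' B := by
  have hmeas : Measurable[hT.measurableSpace] (B.indicator (fun _ => (1 : ℝ≥0∞))) :=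
    measurable_const.indicator hBT
  have h1 := hQ.2 T hT _ hmeas
  have h2 := hQ'.2 T hT _ hmeas
  have key : ∀ μ : Measure Ω,
      ∫⁻ ω in {ω | T ω < M.ζ ω}, B.indicator (fun _ => (1 : ℝ≥0∞)) ω ∂μ = μ B := by
    intro μ
    have h1' : ∫⁻ ω, B.indicator (fun _ => (1 : ℝ≥0∞)) ω
        ∂(μ.restrict {ω | T ω < M.ζ ω}) = μ.restrict {ω | T ω < M.ζ ω} B := by
      exact lintegral_indicator_one (μ := μ.restrict {ω | T ω < M.ζ ω}) hBm
    rw [h1', Measure.restrict_apply hBm, Set.inter_eq_left.2 hBsub]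
  rw [key Q] at h1
  rw [key Q'] at h2
  have h0 : ENNReal.ofReal (M.S0 i) ≠ 0 := (ENNReal.ofReal_pos.2 (M.S0_pos i)).ne'
  have hq := (ENNReal.eq_div_iff h0 ENNReal.ofReal_ne_top).2 h1.symm
  have hq' := (ENNReal.eq_div_iff h0 ENNReal.ofReal_ne_top).2 h2.symm
  rw [hq, hq']

lemma Model.valId_zeta_pos (M : Model ι' F' P') (i : ι') {Q : Measure Ω}
    (hQ : M.ValId i Q) : Q {ω | 0 < M.ζ ω} = 1 := by
  haveI := M.hP
  have hT0 : IsExtStoppingTime F' (fun _ : Ω => (0 : ℝ≥0∞)) := fun t => by simp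
  have h := hQ.2 _ hT0 (fun _ => 1) measurable_const
  have hm0 : MeasurableSet[F' 0] {ω | M.ζ ω ≤ 0} := by simpa using M.hζ 0
  have hP0 : P' {ω | M.ζ ω ≤ 0} = 0 := by
    have hsub : {ω | M.ζ ω ≤ 0} ⊆ {ω | ¬ M.S i 0 ω = M.S0 i} := by
      intro ω hω
      rw [Set.mem_setOf_eq, M.S_default i 0 ω (by simpa using hω)]
      exact (M.S0_pos i).ne
    exact measure_mono_null hsub (ae_iff.1 (M.S0_eq i))
  have hZc : {ω | (fun _ : Ω => (0 : ℝ≥0∞)) ω < M.ζ ω} = {ω | M.ζ ω ≤ 0}ᶜ := by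
    ext ω; simp [pos_iff_ne_zero]
  have hPZ : P' {ω | (fun _ : Ω => (0 : ℝ≥0∞)) ω < M.ζ ω} = 1 := by
    rw [hZc, measure_compl (F'.le 0 _ hm0) (measure_ne_top _ _), hP0, measure_univ, tsub_zero]
  have hLHS : ∫⁻ ω in {ω | (fun _ : Ω => (0 : ℝ≥0∞)) ω < M.ζ ω},
      ENNReal.ofReal (ev M.Y (fun _ => 0) ω * ev (M.S i) (fun _ => 0) ω)
        * (fun _ : Ω => (1 : ℝ≥0∞)) ω ∂P' = ENNReal.ofReal (M.S0 i) := by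
    have hae : ∀ᵐ ω ∂P',
        ENNReal.ofReal (ev M.Y (fun _ => 0) ω * ev (M.S i) (fun _ => 0) ω)
          * (fun _ : Ω => (1 : ℝ≥0∞)) ω = ENNReal.ofReal (M.S0 i) := by
      filter_upwards [M.Y0, M.S0_eq i] with ω h1 h2
      simp [ev, h1, h2]
    rw [lintegral_congr_ae (ae_restrict_of_ae hae), setLIntegral_const, hPZ, mul_one]
  rw [hLHS, setLIntegral_one] at h
  have h0 : ENNReal.ofReal (M.S0 i) ≠ 0 := (ENNReal.ofReal_pos.2 (M.S0_pos i)).ne'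
  have := (ENNReal.eq_div_iff h0 ENNReal.ofReal_ne_top).2 h.symm
  have hself : ENNReal.ofReal (M.S0 i) / ENNReal.ofReal (M.S0 i) = 1 :=
    ENNReal.div_self h0 ENNReal.ofReal_ne_top
  have hfin : Q {ω | (fun _ : Ω => (0 : ℝ≥0∞)) ω < M.ζ ω} = 1 := this.trans hself
  simpa using hfin

lemma Model.valId_zeta_zero (M : Model ι' F' P') (i : ι') {Q : Measure Ω}
    (hQ : M.ValId i Q) : Q {ω | M.ζ ω ≤ 0} = 0 := by
  haveI := hQ.1
  have hm0 : MeasurableSet {ω | M.ζ ω ≤ 0} := F'.le 0 _ (by simpa using M.hζ 0)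
  have hZ : {ω | M.ζ ω ≤ 0} = {ω | 0 < M.ζ ω}ᶜ := by
    ext ω; simp [pos_iff_ne_zero]
  have hZm : MeasurableSet {ω | 0 < M.ζ ω} := by
    rw [show {ω | 0 < M.ζ ω} = {ω | M.ζ ω ≤ 0}ᶜ by ext ω; simp [pos_iff_ne_zero]]
    exact hm0.compl
  rw [hZ, measure_compl hZm (measure_ne_top _ _), measure_univ, M.valId_zeta_pos i hQ,
    tsub_self]

end Aux

/-- If `Q` and `Q'` both satisfy the valuation identity for asset `i`,
then they coincide on the σ-algebra generated by `⋃ n, F_{ζ_n-}`. -/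
theorem stmt1 {Ω ι : Type*} {m : MeasurableSpace Ω} {F : Filtration ℝ≥0 m} {P : Measure Ω}
    (M : Model ι F P) (i : ι) (Q Q' : Measure Ω)
    (hQ : M.ValId i Q) (hQ' : M.ValId i Q') :
    ∀ A : Set Ω,
      MeasurableSet[⨆ n : ℕ, sigmaPre F (fun ω => (M.ζn n ω : ℝ≥0∞))] A → Q A = Q' A := by
  classical
  haveI := hQ.1
  haveI := hQ'.1
  -- the π-system
  set 𝒞 : Set (Set Ω) := {B | (∃ (u : ℝ≥0) (N : ℕ), MeasurableSet[F u] B ∧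
      ∀ ω ∈ B, u < M.ζn N ω) ∨ MeasurableSet[F 0] B} with h𝒞
  have hlt_meas : ∀ (n : ℕ) (s : ℝ≥0),
      MeasurableSet[F s] {ω | (s : ℝ≥0∞) < (M.ζn n ω : ℝ≥0∞)} := by
    intro n s
    have hset : {ω | (s : ℝ≥0∞) < (M.ζn n ω : ℝ≥0∞)} = {ω | M.ζn n ω ≤ s}ᶜ := by
      ext ω; simp [not_le]
    rw [hset]; exact (by simpa only [WithTop.coe_le_coe] using M.ζn_stop n s : MeasurableSet[F s] {ω | M.ζn n ω ≤ s}).compl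
  -- generation
  have hgen : (⨆ n : ℕ, sigmaPre F (fun ω => (M.ζn n ω : ℝ≥0∞)))
      = MeasurableSpace.generateFrom 𝒞 := by
    apply le_antisymm
    · refine iSup_le fun n => sup_le ?_ ?_
      · exact fun A hA => MeasurableSpace.measurableSet_generateFrom (Or.inr hA)
      · refine MeasurableSpace.generateFrom_le ?_
        rintro B ⟨s, A, hA, rfl⟩
        refine MeasurableSpace.measurableSet_generateFrom (Or.inl ⟨s, n,
          hA.inter (hlt_meas n s), ?_⟩)
        intro ω hω
        exact ENNReal.coe_lt_coe.1 hω.2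
    · refine MeasurableSpace.generateFrom_le ?_
      rintro B (⟨u, N, hB, hsub⟩ | hB0)
      · refine le_iSup (fun n : ℕ => sigmaPre F (fun ω => (M.ζn n ω : ℝ≥0∞))) N _ ?_
        refine le_sup_right (α := MeasurableSpace Ω) _ ?_
        refine MeasurableSpace.measurableSet_generateFrom ⟨u, B, hB, ?_⟩
        exact (Set.inter_eq_left.2 fun ω hω => ENNReal.coe_lt_coe.2 (hsub ω hω)).symm
      · exact le_iSup (fun n : ℕ => sigmaPre F (fun ω => (M.ζn n ω : ℝ≥0∞))) 0 _
          (le_sup_left (α := MeasurableSpace Ω) _ hB0)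
  -- the whole σ-algebra is below m
  have hle : (⨆ n : ℕ, sigmaPre F (fun ω => (M.ζn n ω : ℝ≥0∞))) ≤ m := by
    refine iSup_le fun n => sup_le (F.le 0) (MeasurableSpace.generateFrom_le ?_)
    rintro B ⟨s, A, hA, rfl⟩
    exact F.le s _ (hA.inter (hlt_meas n s))
  -- π-system
  have hpi : IsPiSystem 𝒞 := by
    rintro B1 (⟨u1, N1, hB1, hsub1⟩ | hB1) B2 (⟨u2, N2, hB2, hsub2⟩ | hB2) _
    · refine Or.inl ⟨max u1 u2, max N1 N2, (F.mono (le_max_left u1 u2) _ hB1).inter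
        (F.mono (le_max_right u1 u2) _ hB2), ?_⟩
      intro ω hω
      refine max_lt (lt_of_lt_of_le (hsub1 ω hω.1) (M.ζn_mono ω (le_max_left N1 N2)))
        (lt_of_lt_of_le (hsub2 ω hω.2) (M.ζn_mono ω (le_max_right N1 N2)))
    · refine Or.inl ⟨u1, N1, hB1.inter (F.mono (zero_le : (0 : ℝ≥0) ≤ u1) _ hB2), ?_⟩
      intro ω hω; exact hsub1 ω hω.1
    · refine Or.inl ⟨u2, N2, (F.mono (zero_le : (0 : ℝ≥0) ≤ u2) _ hB1).inter hB2, ?_⟩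
      intro ω hω; exact hsub2 ω hω.2
    · exact Or.inr (hB1.inter hB2)
  -- basic case
  have hbasic : ∀ B ∈ 𝒞, Q B = Q' B := by
    rintro B (⟨u, N, hB, hsub⟩ | hB0)
    · -- stopping time `T = ζ_N ∧ u`
      set T : Ω → ℝ≥0∞ := fun ω => min (M.ζn N ω : ℝ≥0∞) (u : ℝ≥0∞) with hTdef
      have hT : IsExtStoppingTime F T := by
        intro t
        by_cases h : u ≤ t
        · have hset : {ω | T ω ≤ (t : ℝ≥0∞)} = Set.univ :=
            Set.eq_univ_of_forall fun ω =>
              le_trans (min_le_right _ _) (ENNReal.coe_le_coe.2 h)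
          rw [hset]; exact MeasurableSet.univ
        · have hset : {ω | T ω ≤ (t : ℝ≥0∞)} = {ω | M.ζn N ω ≤ t} := by
            ext ω
            simp only [hTdef, Set.mem_setOf_eq, min_le_iff, ENNReal.coe_le_coe]
            exact ⟨fun hh => hh.resolve_right h, fun hh => Or.inl hh⟩
          rw [hset]; simpa only [WithTop.coe_le_coe] using M.ζn_stop N t
      have hBT : MeasurableSet[hT.measurableSpace] B := by
        rw [extMS_iff]
        intro t
        by_cases h : u ≤ t
        · have hset : B ∩ {ω | T ω ≤ (t : ℝ≥0∞)} = B :=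
            Set.inter_eq_left.2 fun ω _ =>
              le_trans (min_le_right _ _) (ENNReal.coe_le_coe.2 h)
          rw [hset]; exact F.mono h _ hB
        · have hset : B ∩ {ω | T ω ≤ (t : ℝ≥0∞)} = ∅ := by
            refine Set.eq_empty_iff_forall_notMem.2 ?_
            rintro ω ⟨hωB, hωT⟩
            have h1 : (u : ℝ≥0∞) < (M.ζn N ω : ℝ≥0∞) := ENNReal.coe_lt_coe.2 (hsub ω hωB)
            have hTu : T ω = (u : ℝ≥0∞) := min_eq_right h1.le
            have hωT' : T ω ≤ (t : ℝ≥0∞) := hωT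
            rw [hTu] at hωT'
            exact h (ENNReal.coe_le_coe.1 hωT')
          rw [hset]; exact @MeasurableSet.empty _ (F t)
      have hBsub : B ⊆ {ω | T ω < M.ζ ω} := by
        intro ω hω
        have h1 : (u : ℝ≥0∞) < (M.ζn N ω : ℝ≥0∞) := ENNReal.coe_lt_coe.2 (hsub ω hω)
        exact lt_of_le_of_lt (min_le_right _ _) (lt_of_lt_of_le h1 (M.coe_zetan_le N ω))
      exact M.valId_agree i hQ hQ' hT (F.le u _ hB) hBT hBsub
    · -- `B ∈ F_0`
      set T : Ω → ℝ≥0∞ := fun ω => if ω ∈ B then 0 else ∞ with hTdef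
      have hT : IsExtStoppingTime F T := by
        intro t
        have hset : {ω | T ω ≤ (t : ℝ≥0∞)} = B := by
          ext ω
          by_cases h : ω ∈ B <;> simp [hTdef, h]
        rw [hset]; exact F.mono (zero_le : (0 : ℝ≥0) ≤ t) _ hB0
      have hζ0m : MeasurableSet[F 0] {ω | M.ζ ω ≤ 0} := by simpa using M.hζ 0
      have hZm : MeasurableSet[F 0] {ω | 0 < M.ζ ω} := by
        rw [show {ω | 0 < M.ζ ω} = {ω | M.ζ ω ≤ 0}ᶜ by ext ω; simp [pos_iff_ne_zero]]
        exact hζ0m.compl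
      set B' : Set Ω := B ∩ {ω | 0 < M.ζ ω} with hB'def
      have hB'm : MeasurableSet B' := (F.le 0 _ hB0).inter (F.le 0 _ hZm)
      have hB'T : MeasurableSet[hT.measurableSpace] B' := by
        rw [extMS_iff]
        intro t
        have hset : B' ∩ {ω | T ω ≤ (t : ℝ≥0∞)} = B' := by
          refine Set.inter_eq_left.2 fun ω hω => ?_
          simp [hTdef, hω.1]
        rw [hset]
        exact F.mono (zero_le : (0 : ℝ≥0) ≤ t) _ (hB0.inter hZm)
      have hB'sub : B' ⊆ {ω | T ω < M.ζ ω} := by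
        intro ω hω
        have : T ω = 0 := by simp [hTdef, hω.1]
        rw [Set.mem_setOf_eq, this]
        exact hω.2
      have hB' : Q B' = Q' B' := M.valId_agree i hQ hQ' hT hB'm hB'T hB'sub
      have hQc : Q {ω | 0 < M.ζ ω}ᶜ = 0 := by
        rw [show {ω | 0 < M.ζ ω}ᶜ = {ω | M.ζ ω ≤ 0} by ext ω; simp [pos_iff_ne_zero]]
        exact M.valId_zeta_zero i hQ
      have hQ'c : Q' {ω | 0 < M.ζ ω}ᶜ = 0 := by
        rw [show {ω | 0 < M.ζ ω}ᶜ = {ω | M.ζ ω ≤ 0} by ext ω; simp [pos_iff_ne_zero]]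
        exact M.valId_zeta_zero i hQ'
      calc Q B = Q B' := (measure_inter_conull hQc).symm
        _ = Q' B' := hB'
        _ = Q' B := measure_inter_conull hQ'c
  -- π-λ argument
  intro A hA
  refine MeasurableSpace.induction_on_inter
    (m := ⨆ n : ℕ, sigmaPre F (fun ω => (M.ζn n ω : ℝ≥0∞)))
    (C := fun A _ => Q A = Q' A) hgen hpi (by simp) hbasic ?_ ?_ A hA
  · intro t ht hQt
    have htm : MeasurableSet t := hle _ ht
    rw [measure_compl htm (measure_ne_top _ _), measure_compl htm (measure_ne_top _ _),
      measure_univ, measure_univ, hQt]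
  · intro f hdisj hmeas hQf
    rw [measure_iUnion hdisj fun k => hle _ (hmeas k),
      measure_iUnion hdisj fun k => hle _ (hmeas k)]
    exact tsum_congr hQf

end ExchangeOptions
end
end

section
/- Fix i ∈ I and let Q^i be a probability satisfying the valuation identity for asset i. Then the process Y S^i is a nonnegative supermartingale under P, the identity S^i_0 Q^i[t < ζ] = E_P[Y_t S^i_t] holds for every t ≥ 0, and consequently Q^i[ζ = ∞] = 1 holds if and only if the process (Y_t S^i_t)_{t≥0} is an actual martingale under P. -/
open MeasureTheory Filter Set
open scoped NNReal ENNReal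

noncomputable section

namespace ExchangeOptions

variable {Ω : Type*} {m : MeasurableSpace Ω}

variable {ι : Type*} {F : Filtration ℝ≥0 m} {P : Measure Ω}

section Aux

lemma constExtStopping (F : Filtration ℝ≥0 m) (s : ℝ≥0) :
    IsExtStoppingTime F (fun _ => (s : ℝ≥0∞)) := by
  intro t
  by_cases h : (s : ℝ≥0∞) ≤ (t : ℝ≥0∞)
  · simp [h]
  · simp [h]

/-- Key identity: for any constant time `s` and `A ∈ F_s`,
`∫⁻_A (Y_s S^i_s) dP = S^i_0 · Q^i (A ∩ {s < ζ})`. -/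
lemma keyA {ι : Type*} {F : Filtration ℝ≥0 m} {P : Measure Ω}
    (M : Model ι F P) (i : ι) (Qi : Measure Ω) (hQi : M.ValId i Qi)
    (s : ℝ≥0) {A : Set Ω} (hA : MeasurableSet[F s] A) :
    ∫⁻ ω in A, ENNReal.ofReal (M.Y s ω * M.S i s ω) ∂P
      = ENNReal.ofReal (M.S0 i) * Qi (A ∩ {ω | (s : ℝ≥0∞) < M.ζ ω}) := by
  classical
  have hT := constExtStopping F s
  have hAm : MeasurableSet A := F.le s _ hA
  have hAmsp : MeasurableSet[hT.measurableSpace] A := by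
    intro t
    by_cases h : s ≤ t
    · have he : A ∩ {ω : Ω | (s : ℝ≥0∞) ≤ (t : ℝ≥0∞)} = A := by
        have : (s : ℝ≥0∞) ≤ (t : ℝ≥0∞) := by exact_mod_cast h
        simp [this]
      rw [he]; exact F.mono h _ hA
    · have he : A ∩ {ω : Ω | (s : ℝ≥0∞) ≤ (t : ℝ≥0∞)} = ∅ := by
        have : ¬ (s : ℝ≥0∞) ≤ (t : ℝ≥0∞) := by exact_mod_cast h
        simp [this]
      rw [he]; exact @MeasurableSet.empty _ (F t)
  have hξ : Measurable[hT.measurableSpace] (A.indicator (fun _ => (1 : ℝ≥0∞))) :=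
    measurable_const.indicator hAmsp
  have key := hQi.2 (fun _ => (s : ℝ≥0∞)) hT (A.indicator fun _ => (1 : ℝ≥0∞)) hξ
  simp only [ev, ENNReal.toNNReal_coe] at key
  set B : Set Ω := {ω | (s : ℝ≥0∞) < M.ζ ω} with hBdef
  have h1 : ∀ ω, ENNReal.ofReal (M.Y s ω * M.S i s ω) * A.indicator (fun _ => (1:ℝ≥0∞)) ω
      = A.indicator (fun ω => ENNReal.ofReal (M.Y s ω * M.S i s ω)) ω := by
    intro ω; by_cases h : ω ∈ A <;> simp [Set.indicator, h]
  rw [lintegral_congr h1, lintegral_indicator hAm, Measure.restrict_restrict hAm] at key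
  have hRHS : ∫⁻ ω in B, A.indicator (fun _ => (1:ℝ≥0∞)) ω ∂Qi = Qi (A ∩ B) := by
    rw [lintegral_indicator hAm, setLIntegral_one, Measure.restrict_apply hAm]
  rw [hRHS] at key
  have h2 : ∀ ω, ENNReal.ofReal (M.Y s ω * M.S i s ω)
      = B.indicator (fun ω => ENNReal.ofReal (M.Y s ω * M.S i s ω)) ω := by
    intro ω
    by_cases h : ω ∈ B
    · simp [Set.indicator, h]
    · have hζs : M.ζ ω ≤ (s : ℝ≥0∞) := not_lt.1 h
      simp [Set.indicator, h, M.S_default i s ω hζs]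
  have hBm : MeasurableSet B := by
    have : B = {ω | M.ζ ω ≤ (s : ℝ≥0∞)}ᶜ := by ext ω; simp [hBdef, not_le]
    rw [this]; exact (F.le s _ (M.hζ s)).compl
  calc ∫⁻ ω in A, ENNReal.ofReal (M.Y s ω * M.S i s ω) ∂P
      = ∫⁻ ω in A, B.indicator (fun ω => ENNReal.ofReal (M.Y s ω * M.S i s ω)) ω ∂P := by
        exact lintegral_congr h2
    _ = ∫⁻ ω in B ∩ A, ENNReal.ofReal (M.Y s ω * M.S i s ω) ∂P := by
        rw [lintegral_indicator hBm, Measure.restrict_restrict hBm]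
    _ = ∫⁻ ω in A ∩ B, ENNReal.ofReal (M.Y s ω * M.S i s ω) ∂P := by rw [Set.inter_comm]
    _ = ENNReal.ofReal (M.S0 i) * Qi (A ∩ B) := key

/-- `Y_t S^i_t` is `F_t`-strongly measurable. -/
lemma Z_sm {ι : Type*} {F : Filtration ℝ≥0 m} {P : Measure Ω}
    (M : Model ι F P) (i : ι) (t : ℝ≥0) :
    StronglyMeasurable[F t] (fun ω => M.Y t ω * M.S i t ω) := by
  classical
  set g : ℕ → Ω → ℝ := fun n ω =>
    M.Y (min (M.ζn n ω) t) ω * M.S i (min (M.ζn n ω) t) ω with hgdef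
  have hg : ∀ n, Measurable[F t] (g n) := fun n => ((M.mart n i).stronglyAdapted t).measurable
  have hB : MeasurableSet[F t] {ω | (t : ℝ≥0∞) < M.ζ ω} := by
    have : {ω | (t : ℝ≥0∞) < M.ζ ω} = {ω | M.ζ ω ≤ (t : ℝ≥0∞)}ᶜ := by
      ext ω; simp [not_le]
    rw [this]; exact (M.hζ t).compl
  have hrepr : (fun ω => M.Y t ω * M.S i t ω) = Set.indicator {ω | (t : ℝ≥0∞) < M.ζ ω}
      (fun ω => (Filter.limsup (fun n => ENNReal.ofReal (g n ω)) atTop).toReal) := by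
    funext ω
    by_cases h : (t : ℝ≥0∞) < M.ζ ω
    · have h2 : ∀ᶠ n in atTop, (t : ℝ≥0∞) < (M.ζn n ω : ℝ≥0∞) :=
        (M.ζn_tendsto ω).eventually_const_lt h
      have hev : ∀ᶠ n in atTop, g n ω = M.Y t ω * M.S i t ω := by
        filter_upwards [h2] with n hn
        have htn : t ≤ M.ζn n ω := by exact_mod_cast hn.le
        simp [hgdef, min_eq_right htn]
      have hlim : Filter.limsup (fun n => ENNReal.ofReal (g n ω)) atTop
          = ENNReal.ofReal (M.Y t ω * M.S i t ω) := by
        rw [Filter.limsup_congr (hev.mono fun n hn => by rw [hn])]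
        exact Filter.limsup_const _
      rw [Set.indicator_of_mem (show ω ∈ {ω | (t : ℝ≥0∞) < M.ζ ω} from h), hlim,
        ENNReal.toReal_ofReal (mul_nonneg (M.Y_nonneg _ _) (M.S_nonneg _ _ _))]
    · rw [Set.indicator_of_notMem (show ω ∉ {ω | (t : ℝ≥0∞) < M.ζ ω} from h),
        M.S_default i t ω (not_lt.1 h), mul_zero]
  rw [hrepr]
  have h1 : Measurable[F t] fun ω => Filter.limsup (fun n => ENNReal.ofReal (g n ω)) atTop :=
    Measurable.limsup (fun n => ENNReal.measurable_ofReal.comp (hg n))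
  exact ((ENNReal.measurable_toReal.comp h1).indicator hB).stronglyMeasurable

lemma Z_int {ι : Type*} {F : Filtration ℝ≥0 m} {P : Measure Ω}
    (M : Model ι F P) (i : ι) (Qi : Measure Ω) (hQi : M.ValId i Qi) (t : ℝ≥0) :
    Integrable (fun ω => M.Y t ω * M.S i t ω) P := by
  haveI := hQi.1
  refine ⟨((Z_sm M i t).mono (F.le t)).aestronglyMeasurable, ?_⟩
  rw [hasFiniteIntegral_iff_ofReal (Eventually.of_forall fun ω =>
    mul_nonneg (M.Y_nonneg _ _) (M.S_nonneg _ _ _))]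
  have hk := keyA M i Qi hQi t (MeasurableSet.univ (α := Ω))
  rw [Measure.restrict_univ] at hk
  rw [hk]
  exact lt_of_le_of_lt (mul_le_mul_right (measure_mono (Set.subset_univ _)) _)
    (ENNReal.mul_lt_top ENNReal.ofReal_lt_top (measure_lt_top Qi Set.univ))

lemma Z_setInt {ι : Type*} {F : Filtration ℝ≥0 m} {P : Measure Ω}
    (M : Model ι F P) (i : ι) (Qi : Measure Ω) (hQi : M.ValId i Qi)
    (s : ℝ≥0) {A : Set Ω} (hA : MeasurableSet[F s] A) :
    ∫ ω in A, M.Y s ω * M.S i s ω ∂P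
      = (ENNReal.ofReal (M.S0 i) * Qi (A ∩ {ω | (s : ℝ≥0∞) < M.ζ ω})).toReal := by
  rw [← keyA M i Qi hQi s hA]
  rw [integral_eq_lintegral_of_nonneg_ae (Eventually.of_forall fun ω =>
    mul_nonneg (M.Y_nonneg _ _) (M.S_nonneg _ _ _))
    (((Z_sm M i s).mono (F.le s)).aestronglyMeasurable.restrict)]

end Aux

/-- If `Q^i` satisfies the valuation identity for asset `i`, then `Y S^i`
is a nonnegative supermartingale under `P`, `S^i_0 Q^i[t < ζ] = E_P[Y_t S^i_t]` for every
`t ≥ 0`, and `Q^i[ζ = ∞] = 1` if and only if `Y S^i` is an actual martingale under `P`. -/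
theorem stmt4 {Ω ι : Type*} {m : MeasurableSpace Ω} {F : Filtration ℝ≥0 m} {P : Measure Ω}
    (M : Model ι F P) (i : ι) (Qi : Measure Ω) (hQi : M.ValId i Qi) :
    (∀ (t : ℝ≥0) (ω : Ω), 0 ≤ M.Y t ω * M.S i t ω) ∧
    Supermartingale (fun (t : ℝ≥0) ω => M.Y t ω * M.S i t ω) F P ∧
    (∀ t : ℝ≥0, ENNReal.ofReal (M.S0 i) * Qi {ω | (t : ℝ≥0∞) < M.ζ ω}
      = ∫⁻ ω, ENNReal.ofReal (M.Y t ω * M.S i t ω) ∂P) ∧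
    (Qi {ω | M.ζ ω = ∞} = 1 ↔
      Martingale (fun (t : ℝ≥0) ω => M.Y t ω * M.S i t ω) F P) := by
  classical
  haveI := M.hP
  haveI := hQi.1
  set Z : ℝ≥0 → Ω → ℝ := fun t ω => M.Y t ω * M.S i t ω with hZdef
  have hnonneg : ∀ (t : ℝ≥0) (ω : Ω), 0 ≤ Z t ω := fun t ω =>
    mul_nonneg (M.Y_nonneg _ _) (M.S_nonneg _ _ _)
  have hadp : StronglyAdapted F Z := fun t => Z_sm M i t
  have hint : ∀ t, Integrable (Z t) P := fun t => Z_int M i Qi hQi t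
  have hfin : ∀ (u : ℝ≥0) (A : Set Ω),
      ENNReal.ofReal (M.S0 i) * Qi (A ∩ {ω | (u : ℝ≥0∞) < M.ζ ω}) ≠ ∞ :=
    fun u A => (ENNReal.mul_lt_top ENNReal.ofReal_lt_top (measure_lt_top _ _)).ne
  have hsubset : ∀ (s t : ℝ≥0), s ≤ t → ∀ A : Set Ω,
      A ∩ {ω | (t : ℝ≥0∞) < M.ζ ω} ⊆ A ∩ {ω | (s : ℝ≥0∞) < M.ζ ω} := by
    intro s t hst A ω hω
    exact ⟨hω.1, lt_of_le_of_lt (show (s : ℝ≥0∞) ≤ (t : ℝ≥0∞) by exact_mod_cast hst) hω.2⟩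
  have hle : ∀ s t : ℝ≥0, s ≤ t → ∀ A : Set Ω, MeasurableSet[F s] A →
      ∫ ω in A, Z t ω ∂P ≤ ∫ ω in A, Z s ω ∂P := by
    intro s t hst A hA
    rw [Z_setInt M i Qi hQi s hA, Z_setInt M i Qi hQi t (F.mono hst _ hA)]
    exact ENNReal.toReal_mono (hfin s A)
      (mul_le_mul_right (measure_mono (hsubset s t hst A)) _)
  have hsuper : Supermartingale Z F P := by
    have hsub : Submartingale (fun t ω => -(Z t ω)) F P := by
      refine submartingale_of_setIntegral_le (fun t => (hadp t).neg)
        (fun t => (hint t).neg) ?_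
      intro s t hst A hA
      simp only [integral_neg]
      exact neg_le_neg (hle s t hst A hA)
    have hneg := hsub.neg
    have heq : (-fun (t : ℝ≥0) (ω : Ω) => -(Z t ω)) = Z := by
      funext t ω; simp
    rwa [heq] at hneg
  have h3 : ∀ t : ℝ≥0, ENNReal.ofReal (M.S0 i) * Qi {ω | (t : ℝ≥0∞) < M.ζ ω}
      = ∫⁻ ω, ENNReal.ofReal (Z t ω) ∂P := by
    intro t
    have hk := keyA M i Qi hQi t (MeasurableSet.univ (α := Ω))
    rw [Measure.restrict_univ, Set.univ_inter] at hk
    exact hk.symm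
  have hmsetm : ∀ u : ℝ≥0, MeasurableSet {ω | (u : ℝ≥0∞) < M.ζ ω} := by
    intro u
    have he : {ω | (u : ℝ≥0∞) < M.ζ ω} = {ω | M.ζ ω ≤ (u : ℝ≥0∞)}ᶜ := by
      ext ω; simp [not_le]
    rw [he]; exact (F.le u _ (M.hζ u)).compl
  have hinfset : {ω | M.ζ ω = ∞} = ⋂ n : ℕ, {ω | ((n : ℝ≥0) : ℝ≥0∞) < M.ζ ω} := by
    ext ω
    simp only [Set.mem_iInter, Set.mem_setOf_eq]
    constructor
    · intro h n; rw [h]; exact ENNReal.coe_lt_top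
    · intro h
      by_contra hne
      obtain ⟨n, hn⟩ := ENNReal.exists_nat_gt hne
      have hh := h n
      rw [show ((n : ℝ≥0) : ℝ≥0∞) = (n : ℝ≥0∞) by simp] at hh
      exact absurd hn (not_lt.2 hh.le)
  have hmeasinf : MeasurableSet {ω | M.ζ ω = ∞} := by
    rw [hinfset]; exact MeasurableSet.iInter fun n => hmsetm _
  refine ⟨hnonneg, hsuper, h3, ?_, ?_⟩
  · intro hQ
    have hone : ∀ u : ℝ≥0, Qi {ω | (u : ℝ≥0∞) < M.ζ ω}ᶜ = 0 := by
      intro u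
      have hsub2 : {ω | (u : ℝ≥0∞) < M.ζ ω}ᶜ ⊆ {ω | M.ζ ω = ∞}ᶜ := by
        intro ω h hc
        exact h (by rw [Set.mem_setOf_eq, hc]; exact ENNReal.coe_lt_top)
      refine measure_mono_null hsub2 ?_
      rw [prob_compl_eq_one_sub hmeasinf, hQ]
      simp
    have heq : ∀ s t : ℝ≥0, s ≤ t → ∀ A : Set Ω, MeasurableSet[F s] A →
        ∫ ω in A, Z s ω ∂P = ∫ ω in A, Z t ω ∂P := by
      intro s t hst A hA
      rw [Z_setInt M i Qi hQi s hA, Z_setInt M i Qi hQi t (F.mono hst _ hA),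
        measure_inter_conull (hone s), measure_inter_conull (hone t)]
    exact martingale_iff.2 ⟨hsuper,
      submartingale_of_setIntegral_le hadp hint fun s t hst A hA => (heq s t hst A hA).le⟩
  · intro hmart
    have h0 : ∫ ω, Z 0 ω ∂P = M.S0 i := by
      have hae : Z 0 =ᵐ[P] fun _ => M.S0 i := by
        filter_upwards [M.Y0, M.S0_eq i] with ω h1 h2
        simp [hZdef, h1, h2]
      rw [integral_congr_ae hae, integral_const]
      simp
    have hone : ∀ t : ℝ≥0, Qi {ω | (t : ℝ≥0∞) < M.ζ ω} = 1 := by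
      intro t
      have hZt : ∫ ω, Z t ω ∂P = M.S0 i := by
        have hm := hmart.setIntegral_eq (zero_le : (0 : ℝ≥0) ≤ t) (MeasurableSet.univ (α := Ω))
        rw [setIntegral_univ, setIntegral_univ] at hm
        rw [← hm]; exact h0
      have h2 := Z_setInt M i Qi hQi t (MeasurableSet.univ (α := Ω))
      rw [Set.univ_inter, setIntegral_univ, hZt, ENNReal.toReal_mul,
        ENNReal.toReal_ofReal (M.S0_pos i).le] at h2
      have hq : (1 : ℝ) = (Qi {ω | (t : ℝ≥0∞) < M.ζ ω}).toReal :=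
        mul_left_cancel₀ (M.S0_pos i).ne' (by rw [mul_one]; exact h2)
      exact (ENNReal.toReal_eq_one_iff _).1 hq.symm
    rw [hinfset]
    have hcompl : Qi (⋂ n : ℕ, {ω | ((n : ℝ≥0) : ℝ≥0∞) < M.ζ ω})ᶜ = 0 := by
      rw [Set.compl_iInter]
      exact measure_iUnion_null fun n =>
        (prob_compl_eq_zero_iff₀ (hmsetm _).nullMeasurableSet).2 (hone _)
    exact (prob_compl_eq_zero_iff₀
      ((MeasurableSet.iInter fun n : ℕ => hmsetm _).nullMeasurableSet)).1 hcompl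

end ExchangeOptions
end
end

section
/- Fix i ∈ I and j ∈ I and let Q^i, Q^j be probabilities satisfying the valuation identity for assets i and j respectively. Then for every stopping time T, the European put-call parity relation EX^{ij}(T) + S^i_0 Q^i[T < ζ] = EX^{ji}(T) + S^j_0 Q^j[T < ζ] holds. -/
open MeasureTheory Filter Set
open scoped NNReal ENNReal

noncomputable section

namespace ExchangeOptions

variable {Ω : Type*} {m : MeasurableSpace Ω}

variable {ι : Type*} {F : Filtration ℝ≥0 m} {P : Measure Ω}

section Aux

lemma measurable_comp_countable' {α : Type*} {mα : MeasurableSpace α}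
    {u : ℝ≥0 → α → ℝ} (hu : ∀ t, Measurable (u t)) {e : α → ℝ≥0}
    (he : Measurable e) (hcr : (Set.range e).Countable) :
    Measurable fun ω => u (e ω) ω := by
  intro s hs
  have h : (fun ω => u (e ω) ω) ⁻¹' s
      = ⋃ t ∈ Set.range e, (e ⁻¹' {t}) ∩ (u t ⁻¹' s) := by
    ext ω
    simp only [Set.mem_preimage, Set.mem_iUnion, Set.mem_inter_iff, Set.mem_singleton_iff]
    constructor
    · intro hmem
      exact ⟨e ω, ⟨ω, rfl⟩, rfl, hmem⟩
    · rintro ⟨t, _, ht, hmem⟩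
      rw [← ht] at hmem; exact hmem
  rw [h]
  exact MeasurableSet.biUnion hcr fun t _ =>
    (he (measurableSet_singleton t)).inter (hu t hs)

lemma ofReal_max_zero' (x : ℝ) : ENNReal.ofReal (x ⊔ 0) = ENNReal.ofReal x := by
  rcases le_total x 0 with h | h
  · rw [max_eq_right h, ENNReal.ofReal_of_nonpos h, ENNReal.ofReal_zero]
  · rw [max_eq_left h]

lemma parity_pointwise (a b : ℝ) (ha : 0 ≤ a) (hb : 0 ≤ b) :
    ENNReal.ofReal (b - a) + ENNReal.ofReal a
      = ENNReal.ofReal (a - b) + ENNReal.ofReal b := by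
  rcases le_total a b with h | h
  · have h1 : ENNReal.ofReal (a - b) = 0 := ENNReal.ofReal_of_nonpos (by linarith)
    rw [h1, zero_add, ← ENNReal.ofReal_add (by linarith) ha]
    congr 1; ring
  · have h1 : ENNReal.ofReal (b - a) = 0 := ENNReal.ofReal_of_nonpos (by linarith)
    rw [h1, zero_add, ← ENNReal.ofReal_add (by linarith) hb]
    congr 1; ring

end Aux

/-- European put-call parity: for `Q^i, Q^j` satisfying the valuation
identities, for every stopping time `T`,
`EX^{ij}(T) + S^i_0 Q^i[T < ζ] = EX^{ji}(T) + S^j_0 Q^j[T < ζ]`. -/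
theorem stmt16 {Ω ι : Type*} {m : MeasurableSpace Ω} {F : Filtration ℝ≥0 m} {P : Measure Ω}
    (M : Model ι F P) (i j : ι) (Qi Qj : Measure Ω)
    (hQi : M.ValId i Qi) (hQj : M.ValId j Qj)
    (T : Ω → ℝ≥0∞) (hT : IsExtStoppingTime F T) :
    M.EX i j T + ENNReal.ofReal (M.S0 i) * Qi {ω | T ω < M.ζ ω}
      = M.EX j i T + ENNReal.ofReal (M.S0 j) * Qj {ω | T ω < M.ζ ω} := by
  classical
  set D : Set Ω := {ω | T ω < M.ζ ω} with hDdef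
  have hFle : ∀ t : ℝ≥0, (F t : MeasurableSpace Ω) ≤ m := by
    intro t
    conv_rhs => rw [← M.hFinf]
    exact le_iSup (fun t : ℝ≥0 => (F t : MeasurableSpace Ω)) t
  have hmeas_ext : ∀ (τ : Ω → ℝ≥0∞), IsExtStoppingTime F τ → Measurable τ := by
    intro τ hτ
    apply measurable_of_Iic
    intro a
    rcases eq_or_ne a ∞ with rfl | ha
    · have huniv : τ ⁻¹' Set.Iic ∞ = Set.univ := by ext ω; simp
      rw [huniv]; exact MeasurableSet.univ
    · have h1 := hFle a.toNNReal _ (hτ a.toNNReal)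
      have h2 : τ ⁻¹' Set.Iic a = {ω | τ ω ≤ ((a.toNNReal : ℝ≥0) : ℝ≥0∞)} := by
        rw [ENNReal.coe_toNNReal ha]; rfl
      rw [h2]; exact h1
  have hTm : Measurable T := hmeas_ext T hT
  have hζm : Measurable M.ζ := hmeas_ext M.ζ M.hζ
  have hDm : MeasurableSet D := measurableSet_lt hTm hζm
  -- the key measurability fact
  have key : ∀ k : ι, AEMeasurable (fun ω => ev M.Y T ω * ev (M.S k) T ω) (P.restrict D) := by
    intro k
    have hhm : Measurable fun ω => (T ω).toNNReal := ENNReal.measurable_toNNReal.comp hTm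
    set h : Ω → ℝ≥0 := fun ω => (T ω).toNNReal with hhdef
    set u : ℕ → ℝ≥0 → Ω → ℝ :=
      fun n t ω => M.Y (min (M.ζn n ω) t) ω * M.S k (min (M.ζn n ω) t) ω with hudef
    have hum : ∀ n t, Measurable (u n t) := fun n t =>
      (((M.mart n k).stronglyAdapted t).measurable).mono (hFle t) le_rfl
    -- dyadic upper approximations of `h`
    set e : ℕ → Ω → ℝ≥0 := fun p ω => (⌈h ω * 2 ^ p⌉₊ : ℝ≥0) / 2 ^ p with hedef
    have h2pos : ∀ p : ℕ, (0 : ℝ≥0) < 2 ^ p := fun p => pow_pos (by norm_num) p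
    have hle : ∀ p ω, h ω ≤ e p ω := by
      intro p ω
      show h ω ≤ (⌈h ω * 2 ^ p⌉₊ : ℝ≥0) / 2 ^ p
      rw [le_div_iff₀ (h2pos p)]
      exact Nat.le_ceil _
    have hub : ∀ p ω, e p ω ≤ h ω + (2⁻¹ : ℝ≥0) ^ p := by
      intro p ω
      show (⌈h ω * 2 ^ p⌉₊ : ℝ≥0) / 2 ^ p ≤ h ω + (2⁻¹ : ℝ≥0) ^ p
      rw [div_le_iff₀ (h2pos p), add_mul, inv_pow, inv_mul_cancel₀ (h2pos p).ne']
      exact (Nat.ceil_lt_add_one zero_le).le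
    have hem : ∀ p, Measurable (e p) := by
      intro p
      have hmono : Monotone fun x : ℝ≥0 => (⌈x * 2 ^ p⌉₊ : ℝ≥0) / 2 ^ p := by
        intro a b hab
        show (⌈a * 2 ^ p⌉₊ : ℝ≥0) / 2 ^ p ≤ (⌈b * 2 ^ p⌉₊ : ℝ≥0) / 2 ^ p
        rw [div_eq_mul_inv, div_eq_mul_inv]
        exact mul_le_mul_left (Nat.cast_le.2 (Nat.ceil_le_ceil
          (mul_le_mul_left hab _))) _
      exact hmono.measurable.comp hhm
    have hecr : ∀ p, (Set.range (e p)).Countable := by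
      intro p
      have hsub : Set.range (e p) ⊆ Set.range (fun n : ℕ => (n : ℝ≥0) / 2 ^ p) := by
        rintro x ⟨ω, rfl⟩
        exact ⟨⌈h ω * 2 ^ p⌉₊, rfl⟩
      exact (Set.countable_range _).mono hsub
    have hetend : ∀ ω, Tendsto (fun p => e p ω) atTop (nhds (h ω)) := by
      intro ω
      have hpow : Tendsto (fun p : ℕ => (2⁻¹ : ℝ≥0) ^ p) atTop (nhds 0) :=
        NNReal.tendsto_pow_atTop_nhds_zero_of_lt_one two_inv_lt_one
      have hupper : Tendsto (fun p => h ω + (2⁻¹ : ℝ≥0) ^ p) atTop (nhds (h ω + 0)) :=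
        tendsto_const_nhds.add hpow
      rw [add_zero] at hupper
      exact tendsto_of_tendsto_of_tendsto_of_le_of_le tendsto_const_nhds hupper
        (fun p => hle p ω) (fun p => hub p ω)
    have hgm : ∀ n : ℕ, AEMeasurable (fun ω => u n (h ω) ω) P := by
      intro n
      have hφm : ∀ p : ℕ, Measurable fun ω => u n (e p ω) ω :=
        fun p => measurable_comp_countable' (hum n) (hem p) (hecr p)
      have htend : ∀ᵐ ω ∂P, Tendsto (fun p => u n (e p ω) ω) atTop (nhds (u n (h ω) ω)) := by
        filter_upwards [M.cadlag n k] with ω hω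
        have hrc := hω.1 (h ω)
        have h1 : Tendsto (fun p => e p ω) atTop (nhdsWithin (h ω) (Set.Ici (h ω))) :=
          tendsto_nhdsWithin_of_tendsto_nhds_of_eventually_within _ (hetend ω)
            (Filter.Eventually.of_forall fun p => hle p ω)
        exact Filter.Tendsto.comp hrc h1
      exact aemeasurable_of_tendsto_metrizable_ae atTop (fun p => (hφm p).aemeasurable) htend
    have htendD : ∀ ω ∈ D, Tendsto (fun n => u n (h ω) ω) atTop
        (nhds (ev M.Y T ω * ev (M.S k) T ω)) := by
      intro ω hω
      have hωlt : T ω < M.ζ ω := hω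
      have hTne : T ω ≠ ∞ := (lt_of_lt_of_le hωlt le_top).ne
      have hcoe : ((h ω : ℝ≥0) : ℝ≥0∞) = T ω := ENNReal.coe_toNNReal hTne
      have hev : ∀ᶠ n in atTop, u n (h ω) ω = ev M.Y T ω * ev (M.S k) T ω := by
        have hmem : Set.Ioi (T ω) ∈ nhds (M.ζ ω) := Ioi_mem_nhds hωlt
        filter_upwards [(M.ζn_tendsto ω).eventually_mem hmem] with n hn
        have hge : h ω ≤ M.ζn n ω := by
          rw [← ENNReal.coe_le_coe, hcoe]
          exact le_of_lt hn
        show M.Y (min (M.ζn n ω) (h ω)) ω * M.S k (min (M.ζn n ω) (h ω)) ω = _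
        rw [min_eq_right hge]
        rfl
      have hev' : (fun _ : ℕ => ev M.Y T ω * ev (M.S k) T ω) =ᶠ[atTop]
          fun n => u n (h ω) ω := hev.mono fun n hn => hn.symm
      exact Tendsto.congr' hev' tendsto_const_nhds
    refine aemeasurable_of_tendsto_metrizable_ae atTop (fun n => (hgm n).restrict) ?_
    exact (ae_restrict_iff' hDm).2 (ae_of_all _ fun ω hω => htendD ω hω)
  -- pointwise nonnegativity
  have hZnn : ∀ (k : ι) (ω : Ω), 0 ≤ ev M.Y T ω * ev (M.S k) T ω :=
    fun k ω => mul_nonneg (M.Y_nonneg _ _) (M.S_nonneg _ _ _)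
  -- rewrite the exchange-option values
  have hEX : ∀ a b : ι, M.EX a b T
      = ∫⁻ ω in D, ENNReal.ofReal (ev M.Y T ω * ev (M.S b) T ω
          - ev M.Y T ω * ev (M.S a) T ω) ∂P := by
    intro a b
    refine lintegral_congr fun ω => ?_
    simp only [ev]
    rw [mul_max_of_nonneg _ _ (M.Y_nonneg _ _), mul_zero, ofReal_max_zero', mul_sub]
  -- the valuation identity with ξ = 1
  have hval : ∀ (k : ι) (Q : Measure Ω), M.ValId k Q →
      ∫⁻ ω in D, ENNReal.ofReal (ev M.Y T ω * ev (M.S k) T ω) ∂P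
        = ENNReal.ofReal (M.S0 k) * Q D := by
    intro k Q hQ
    have h1 := hQ.2 T hT (fun _ => 1) measurable_const
    simpa [setLIntegral_one, ← hDdef] using h1
  calc M.EX i j T + ENNReal.ofReal (M.S0 i) * Qi D
      = (∫⁻ ω in D, ENNReal.ofReal (ev M.Y T ω * ev (M.S j) T ω
            - ev M.Y T ω * ev (M.S i) T ω) ∂P)
        + ∫⁻ ω in D, ENNReal.ofReal (ev M.Y T ω * ev (M.S i) T ω) ∂P := by
        rw [hEX i j, hval i Qi hQi]
    _ = ∫⁻ ω in D, (ENNReal.ofReal (ev M.Y T ω * ev (M.S j) T ω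
            - ev M.Y T ω * ev (M.S i) T ω)
          + ENNReal.ofReal (ev M.Y T ω * ev (M.S i) T ω)) ∂P :=
        (lintegral_add_right' _ ((key i).ennreal_ofReal)).symm
    _ = ∫⁻ ω in D, (ENNReal.ofReal (ev M.Y T ω * ev (M.S i) T ω
            - ev M.Y T ω * ev (M.S j) T ω)
          + ENNReal.ofReal (ev M.Y T ω * ev (M.S j) T ω)) ∂P :=
        lintegral_congr fun ω => parity_pointwise _ _ (hZnn i ω) (hZnn j ω)
    _ = (∫⁻ ω in D, ENNReal.ofReal (ev M.Y T ω * ev (M.S i) T ω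
            - ev M.Y T ω * ev (M.S j) T ω) ∂P)
        + ∫⁻ ω in D, ENNReal.ofReal (ev M.Y T ω * ev (M.S j) T ω) ∂P :=
        lintegral_add_right' _ ((key j).ennreal_ofReal)
    _ = M.EX j i T + ENNReal.ofReal (M.S0 j) * Qj D := by
        rw [hEX j i, hval j Qj hQj]

end ExchangeOptions
end
end

section
/- Fix i ∈ I and j ∈ I and let Q^i, Q^j be probabilities satisfying the valuation identity for assets i and j respectively. Then for every stopping time T, the American put-call parity relation AX^{ij}(T) + S^i_0 = AX^{ji}(T) + S^j_0 holds. -/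
open MeasureTheory Filter Set
open scoped NNReal ENNReal

noncomputable section

namespace ExchangeOptions

variable {Ω : Type*} {m : MeasurableSpace Ω}

variable {ι : Type*} {F : Filtration ℝ≥0 m} {P : Measure Ω}

section Aux

open scoped Topology

variable {P : Measure Ω}

/-- lintegral over an increasing union of (not necessarily measurable) sets. -/
theorem lintegral_iUnion_mono' (P : Measure Ω) (f : Ω → ℝ≥0∞) {A : ℕ → Set Ω}
    (hmono : Monotone A) :
    ∫⁻ x in ⋃ n, A n, f x ∂P = ⨆ n, ∫⁻ x in A n, f x ∂P := by
  refine le_antisymm ?_ (iSup_le fun n =>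
    lintegral_mono' (Measure.restrict_mono (subset_iUnion A n) le_rfl) le_rfl)
  rw [lintegral_def]
  refine iSup₂_le fun g hg => ?_
  rw [g.lintegral_restrict_iUnion_of_directed hmono.directed_le]
  exact iSup_mono fun n => by
    rw [← SimpleFunc.lintegral_eq_lintegral]; exact lintegral_mono hg

theorem meas_of_st {F : Filtration ℝ≥0 m} {σ : Ω → ℝ≥0}
    (h : IsStoppingTime F (fun ω => (σ ω : WithTop ℝ≥0))) :
    Measurable[m] σ :=
  measurable_of_Iic fun t => by
    have h' := F.le t _ (h t)
    simp only [WithTop.coe_le_coe] at h'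
    exact h'

theorem meas_of_ext {F : Filtration ℝ≥0 m} {τ : Ω → ℝ≥0∞} (h : IsExtStoppingTime F τ) :
    Measurable[m] τ := by
  refine measurable_of_Iic fun x => ?_
  induction x using ENNReal.recTopCoe with
  | top => simp
  | coe t => exact F.le t _ (h t)

/-- The expectation of an a.s. right-continuous martingale at a bounded stopping time equals
its initial expectation. -/
theorem integral_stoppedValue_eq {F : Filtration ℝ≥0 m} [IsFiniteMeasure P] {f : ℝ≥0 → Ω → ℝ}
    (hmart : Martingale f F P)
    (hcad : ∀ᵐ ω ∂P, ∀ t : ℝ≥0, ContinuousWithinAt (fun s => f s ω) (Ici t) t)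
    {σ : Ω → ℝ≥0} (hσ : IsStoppingTime F (fun ω => (σ ω : WithTop ℝ≥0))) {n : ℝ≥0} (hσle : ∀ ω, σ ω ≤ n) :
    Integrable (fun ω => f (σ ω) ω) P ∧ ∫ ω, f (σ ω) ω ∂P = ∫ ω, f 0 ω ∂P := by
  classical
  set c : ℝ≥0 := n + 1 with hc
  set σk : ℕ → Ω → ℝ≥0 := fun k ω => (⌈σ ω * 2 ^ k⌉₊ : ℝ≥0) / 2 ^ k with hσk_def
  have h2k : ∀ k : ℕ, (0 : ℝ≥0) < 2 ^ k := fun k => pow_pos two_pos k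
  have hσk_ge : ∀ k ω, σ ω ≤ σk k ω := by
    intro k ω
    rw [hσk_def]
    rw [le_div_iff₀ (h2k k)]
    exact Nat.le_ceil _
  have hσk_le_add : ∀ k ω, σk k ω ≤ σ ω + ((2 : ℝ≥0) ^ k)⁻¹ := by
    intro k ω
    rw [hσk_def]
    rw [div_le_iff₀ (h2k k)]
    calc (⌈σ ω * 2 ^ k⌉₊ : ℝ≥0) ≤ σ ω * 2 ^ k + 1 := (Nat.ceil_lt_add_one zero_le).le
      _ = (σ ω + ((2 : ℝ≥0) ^ k)⁻¹) * 2 ^ k := by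
          rw [add_mul, inv_mul_cancel₀ (h2k k).ne']
  have hσk_le : ∀ k ω, σk k ω ≤ c := by
    intro k ω
    refine (hσk_le_add k ω).trans ?_
    rw [hc]
    refine add_le_add (hσle ω) ?_
    exact inv_le_one_iff₀.mpr (Or.inr (one_le_pow₀ (one_le_two (α := ℝ≥0))))
  have hσk_st : ∀ k, IsStoppingTime F (fun ω => (σk k ω : WithTop ℝ≥0)) := by
    intro k t
    simp only [WithTop.coe_le_coe]
    have hq : ((⌊t * 2 ^ k⌋₊ : ℝ≥0) / 2 ^ k) ≤ t := by
      rw [div_le_iff₀ (h2k k)]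
      exact Nat.floor_le zero_le
    have hset : {ω | σk k ω ≤ t} = {ω | σ ω ≤ (⌊t * 2 ^ k⌋₊ : ℝ≥0) / 2 ^ k} := by
      ext ω
      simp only [mem_setOf_eq, hσk_def]
      rw [div_le_iff₀ (h2k k), le_div_iff₀ (h2k k)]
      rw [← Nat.le_floor_iff zero_le, Nat.ceil_le]
    rw [hset]
    have h' := hσ ((⌊t * 2 ^ k⌋₊ : ℝ≥0) / 2 ^ k)
    simp only [WithTop.coe_le_coe] at h'
    exact F.mono hq _ h'
  have hσk_cnt : ∀ k, (Set.range (σk k)).Countable := by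
    intro k
    have hsub : Set.range (σk k) ⊆ Set.range (fun j : ℕ => (j : ℝ≥0) / 2 ^ k) := by
      rintro x ⟨ω, rfl⟩; exact ⟨⌈σ ω * 2 ^ k⌉₊, rfl⟩
    exact (Set.countable_range _).mono hsub
  have hle : ∀ k, ((hσk_st k).measurableSpace) ≤ m :=
    fun k => (hσk_st k).measurableSpace_le_of_le (fun ω => WithTop.coe_le_coe.2 (hσk_le k ω))
  have hos : ∀ k, (fun ω => f (σk k ω) ω) =ᵐ[P] P[f c | ((hσk_st k).measurableSpace)] := by
    intro k
    exact hmart.stoppedValue_ae_eq_condExp_of_le_const_of_countable_range (hσk_st k)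
      (fun ω => WithTop.coe_le_coe.2 (hσk_le k ω))
      (by have := (hσk_cnt k).image (fun x : ℝ≥0 => (x : WithTop ℝ≥0)); rwa [← Set.range_comp] at this)
  have hint : ∀ k, Integrable (fun ω => f (σk k ω) ω) P :=
    fun k => integrable_condExp.congr (hos k).symm
  have hInt_eq : ∀ k, ∫ ω, f (σk k ω) ω ∂P = ∫ ω, f 0 ω ∂P := by
    intro k
    rw [integral_congr_ae (hos k), integral_condExp (hle k),
      ← integral_condExp (F.le 0)]
    exact integral_congr_ae (hmart.condExp_ae_eq (show (0 : ℝ≥0) ≤ c from zero_le))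
  have hg_meas : ∀ k, AEStronglyMeasurable (fun ω => f (σk k ω) ω) P :=
    fun k => (hint k).aestronglyMeasurable
  have htendsto : ∀ᵐ ω ∂P, Tendsto (fun k => f (σk k ω) ω) atTop (𝓝 (f (σ ω) ω)) := by
    filter_upwards [hcad] with ω hω
    have hinv : Tendsto (fun k : ℕ => ((2 : ℝ≥0) ^ k)⁻¹) atTop (𝓝 0) := by
      simp_rw [← inv_pow]
      refine NNReal.tendsto_pow_atTop_nhds_zero_of_lt_one ?_
      rw [NNReal.inv_lt_one_iff two_ne_zero]
      exact one_lt_two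
    have h1 : Tendsto (fun k => σk k ω) atTop (𝓝 (σ ω)) := by
      refine tendsto_of_tendsto_of_tendsto_of_le_of_le tendsto_const_nhds ?_
        (fun k => hσk_ge k ω) (fun k => hσk_le_add k ω)
      simpa using tendsto_const_nhds.add hinv
    have h2 : Tendsto (fun k => σk k ω) atTop (𝓝[Ici (σ ω)] (σ ω)) :=
      tendsto_nhdsWithin_of_tendsto_nhds_of_eventually_within _ h1
        (Eventually.of_forall fun k => hσk_ge k ω)
    exact (hω (σ ω)).tendsto.comp h2
  have hUI := (hmart.integrable c).uniformIntegrable_condExp hle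
  have hui : UnifIntegrable (fun k ω => f (σk k ω) ω) 1 P :=
    hUI.2.1.ae_eq (fun k => (hos k).symm)
  obtain ⟨C, hC⟩ := hUI.2.2
  have hG_int : Integrable (fun ω => f (σ ω) ω) P := by
    refine ⟨aestronglyMeasurable_of_tendsto_ae atTop hg_meas htendsto, ?_⟩
    have hCk : ∀ k, ∫⁻ ω, ‖f (σk k ω) ω‖₊ ∂P ≤ C := by
      intro k
      simp only [← enorm_eq_nnnorm]
      rw [← eLpNorm_one_eq_lintegral_enorm, eLpNorm_congr_ae (hos k)]
      exact hC k
    have hliminf : ∫⁻ ω, ‖f (σ ω) ω‖₊ ∂P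
        ≤ liminf (fun k => ∫⁻ ω, ‖f (σk k ω) ω‖₊ ∂P) atTop := by
      have heq : ∫⁻ ω, ‖f (σ ω) ω‖₊ ∂P
          = ∫⁻ ω, liminf (fun k => (‖f (σk k ω) ω‖₊ : ℝ≥0∞)) atTop ∂P := by
        refine lintegral_congr_ae (htendsto.mono fun ω hω => ?_)
        exact ((ENNReal.tendsto_coe.2 hω.nnnorm).liminf_eq).symm
      rw [heq]
      exact lintegral_liminf_le' (fun k => (hg_meas k).enorm)
    refine lt_of_le_of_lt (hliminf.trans ?_) (ENNReal.coe_lt_top (r := C))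
    exact liminf_le_of_frequently_le' (Frequently.of_forall hCk)
  have hLp := tendsto_Lp_finite_of_tendsto_ae le_rfl ENNReal.one_ne_top hg_meas
    (memLp_one_iff_integrable.2 hG_int) hui htendsto
  have hIconv : Tendsto (fun k => ∫ ω, f (σk k ω) ω ∂P) atTop (𝓝 (∫ ω, f (σ ω) ω ∂P)) :=
    tendsto_integral_of_L1' _ hG_int.aestronglyMeasurable (Eventually.of_forall hint) hLp
  refine ⟨hG_int, tendsto_nhds_unique hIconv ?_⟩
  have hconst : (fun k => ∫ ω, f (σk k ω) ω ∂P) = fun _ => ∫ ω, f 0 ω ∂P := funext hInt_eq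
  rw [hconst]
  exact tendsto_const_nhds

end Aux

section ModelLemmas

variable {ι : Type*} {F : Filtration ℝ≥0 m} {P : Measure Ω}

theorem Model.zeta_eq (M : Model ι F P) (ω : Ω) : M.ζ ω = ⨆ n, (M.ζn n ω : ℝ≥0∞) :=
  tendsto_nhds_unique (M.ζn_tendsto ω)
    (tendsto_atTop_iSup fun a b hab => ENNReal.coe_le_coe.2 (M.ζn_mono ω hab))

theorem Model.zetan_le (M : Model ι F P) (n : ℕ) (ω : Ω) : (M.ζn n ω : ℝ≥0∞) ≤ M.ζ ω := by
  rw [M.zeta_eq ω]; exact le_iSup (fun k => (M.ζn k ω : ℝ≥0∞)) n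

/-- Optional sampling for the model: the expectation of `Y S^i` at a stopping time dominated
by `ζn n` equals `S^i_0`. -/
theorem Model.star (M : Model ι F P) (i : ι) (n : ℕ) {σ : Ω → ℝ≥0}
    (hσst : IsStoppingTime F (fun ω => (σ ω : WithTop ℝ≥0))) (hσle : ∀ ω, σ ω ≤ M.ζn n ω) :
    Integrable (fun ω => M.Y (σ ω) ω * M.S i (σ ω) ω) P ∧
      ∫ ω, M.Y (σ ω) ω * M.S i (σ ω) ω ∂P = M.S0 i := by
  haveI := M.hP
  have hcad : ∀ᵐ ω ∂P, ∀ t : ℝ≥0, ContinuousWithinAt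
      (fun s => M.Y (min (M.ζn n ω) s) ω * M.S i (min (M.ζn n ω) s) ω) (Ici t) t :=
    (M.cadlag n i).mono fun ω h => h.1
  have h := integral_stoppedValue_eq (M.mart n i) hcad hσst
    (n := n) (fun ω => (hσle ω).trans (M.ζn_le n ω))
  have heqfun : (fun ω => M.Y (min (M.ζn n ω) (σ ω)) ω * M.S i (min (M.ζn n ω) (σ ω)) ω)
      = fun ω => M.Y (σ ω) ω * M.S i (σ ω) ω :=
    funext fun ω => by rw [min_eq_right (hσle ω)]
  rw [heqfun] at h
  have hzero : ∫ ω, M.Y (min (M.ζn n ω) 0) ω * M.S i (min (M.ζn n ω) 0) ω ∂P = M.S0 i := by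
    have hae : (fun ω => M.Y (min (M.ζn n ω) 0) ω * M.S i (min (M.ζn n ω) 0) ω)
        =ᵐ[P] fun _ => M.S0 i := by
      filter_upwards [M.Y0, M.S0_eq i] with ω h1 h2
      simp only [min_eq_right (show (0 : ℝ≥0) ≤ M.ζn n ω from zero_le), h1, h2, one_mul]
    rw [integral_congr_ae hae, integral_const, probReal_univ]
    simp
  exact ⟨h.1, h.2.trans hzero⟩


/-- The key inequality behind American put-call parity. -/
theorem Model.key (M : Model ι F P) (i j : ι) {T τ : Ω → ℝ≥0∞}
    (hτ : IsExtStoppingTime F τ) (hτT : ∀ ω, τ ω ≤ T ω) :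
    M.EX j i τ + ENNReal.ofReal (M.S0 j) ≤ M.AX i j T + ENNReal.ofReal (M.S0 i) := by
  haveI := M.hP
  have hτm : Measurable τ := meas_of_ext hτ
  have hζm : Measurable M.ζ := meas_of_ext M.hζ
  have hζnm : ∀ n : ℕ, Measurable fun ω => (M.ζn n ω : ℝ≥0∞) :=
    fun n => measurable_coe_nnreal_ennreal.comp (meas_of_st (M.ζn_stop n))
  set σE : ℕ → Ω → ℝ≥0∞ := fun n ω => min (τ ω) (M.ζn n ω : ℝ≥0∞) with hσE_def
  set σR : ℕ → Ω → ℝ≥0 := fun n ω => (σE n ω).toNNReal with hσR_def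
  have hfin : ∀ (n : ℕ) (ω : Ω), σE n ω ≠ ⊤ := fun n ω =>
    ((min_le_right _ _).trans_lt ENNReal.coe_lt_top).ne
  have hcoe : ∀ (n : ℕ) (ω : Ω), (σR n ω : ℝ≥0∞) = σE n ω := fun n ω =>
    ENNReal.coe_toNNReal (hfin n ω)
  have hσRle : ∀ (n : ℕ) (ω : Ω), σR n ω ≤ M.ζn n ω := fun n ω => by
    rw [← ENNReal.coe_le_coe, hcoe]; exact min_le_right _ _
  have hσE_st : ∀ n, IsExtStoppingTime F (σE n) := by
    intro n t
    have hs : {ω | σE n ω ≤ (t : ℝ≥0∞)}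
        = {ω | τ ω ≤ (t : ℝ≥0∞)} ∪ {ω | M.ζn n ω ≤ t} := by
      ext ω
      simp only [hσE_def, mem_setOf_eq, mem_union, min_le_iff, ENNReal.coe_le_coe]
    rw [hs]
    exact (hτ t).union (by
      have h' := M.ζn_stop n t
      simp only [WithTop.coe_le_coe] at h'
      exact h')
  have hσR_st : ∀ n, IsStoppingTime F (fun ω => (σR n ω : WithTop ℝ≥0)) := by
    intro n t
    simp only [WithTop.coe_le_coe]
    have hs : {ω | σR n ω ≤ t} = {ω | σE n ω ≤ (t : ℝ≥0∞)} := by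
      ext ω
      simp only [mem_setOf_eq]
      rw [← ENNReal.coe_le_coe, hcoe]
    rw [hs]; exact hσE_st n t
  have hσET : ∀ (n : ℕ) (ω : Ω), σE n ω ≤ T ω := fun n ω => (min_le_left _ _).trans (hτT ω)
  set A : ℕ → Set Ω := fun n => {ω | σE n ω < M.ζ ω} with hA_def
  have hAm : ∀ n, MeasurableSet (A n) := fun n => measurableSet_lt (hτm.min (hζnm n)) hζm
  set B : ℕ → Set Ω := fun n => {ω | τ ω < (M.ζn n ω : ℝ≥0∞)} with hB_def
  have hBm : ∀ n, MeasurableSet (B n) := fun n => measurableSet_lt hτm (hζnm n)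
  have hBsubA : ∀ n, B n ⊆ A n := by
    intro n ω hω
    simp only [hB_def, mem_setOf_eq] at hω
    simp only [hA_def, mem_setOf_eq, hσE_def]
    exact ((min_le_left _ _).trans_lt hω).trans_le (M.zetan_le n ω)
  -- the valuation identity at the truncated times
  have hstar : ∀ (a : ι) (n : ℕ),
      ∫⁻ ω in A n, ENNReal.ofReal (ev M.Y (σE n) ω * ev (M.S a) (σE n) ω) ∂P
        = ENNReal.ofReal (M.S0 a) := by
    intro a n
    have h := M.star a n (hσR_st n) (hσRle n)
    have hnn : 0 ≤ᵐ[P] fun ω => M.Y (σR n ω) ω * M.S a (σR n ω) ω :=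
      Eventually.of_forall fun ω => mul_nonneg (M.Y_nonneg _ _) (M.S_nonneg _ _ _)
    have hlf : ∫⁻ ω, ENNReal.ofReal (M.Y (σR n ω) ω * M.S a (σR n ω) ω) ∂P
        = ENNReal.ofReal (M.S0 a) := by
      rw [← ofReal_integral_eq_lintegral_ofReal h.1 hnn, h.2]
    have hvanish : ∀ ω, ω ∉ A n →
        ENNReal.ofReal (M.Y (σR n ω) ω * M.S a (σR n ω) ω) = 0 := by
      intro ω hω
      simp only [hA_def, mem_setOf_eq, not_lt] at hω
      have hζσ : M.ζ ω ≤ (σR n ω : ℝ≥0∞) := by rw [hcoe]; exact hω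
      rw [M.S_default a (σR n ω) ω hζσ, mul_zero, ENNReal.ofReal_zero]
    calc ∫⁻ ω in A n, ENNReal.ofReal (ev M.Y (σE n) ω * ev (M.S a) (σE n) ω) ∂P
        = ∫⁻ ω in A n, ENNReal.ofReal (M.Y (σR n ω) ω * M.S a (σR n ω) ω) ∂P :=
          lintegral_congr fun ω => rfl
      _ = ∫⁻ ω, ENNReal.ofReal (M.Y (σR n ω) ω * M.S a (σR n ω) ω) ∂P := by
          rw [← lintegral_indicator (hAm n)]
          refine lintegral_congr fun ω => ?_
          by_cases hω : ω ∈ A n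
          · rw [indicator_of_mem hω]
          · rw [indicator_of_notMem hω, hvanish ω hω]
      _ = ENNReal.ofReal (M.S0 a) := hlf
  have haem : ∀ (a : ι) (n : ℕ), AEMeasurable
      (fun ω => ENNReal.ofReal (ev M.Y (σE n) ω * ev (M.S a) (σE n) ω)) (P.restrict (A n)) :=
    fun a n =>
      ((M.star a n (hσR_st n) (hσRle n)).1.aestronglyMeasurable.aemeasurable.ennreal_ofReal).restrict
  -- put-call parity at the truncated times
  have hhalf : ∀ (a b : ι) (n : ℕ), M.EX a b (σE n) + ENNReal.ofReal (M.S0 a)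
      = ∫⁻ ω in A n, ENNReal.ofReal (ev M.Y (σE n) ω
          * max (ev (M.S a) (σE n) ω) (ev (M.S b) (σE n) ω)) ∂P := by
    intro a b n
    have hEX : M.EX a b (σE n) = ∫⁻ ω in A n,
        ENNReal.ofReal (ev M.Y (σE n) ω
          * max (ev (M.S b) (σE n) ω - ev (M.S a) (σE n) ω) 0) ∂P := rfl
    rw [hEX, ← hstar a n, ← lintegral_add_right' _ (haem a n)]
    refine lintegral_congr fun ω => ?_
    have hy : (0 : ℝ) ≤ ev M.Y (σE n) ω := M.Y_nonneg _ _
    have hsa : (0 : ℝ) ≤ ev (M.S a) (σE n) ω := M.S_nonneg _ _ _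
    rw [← ENNReal.ofReal_add (mul_nonneg hy (le_max_right _ _)) (mul_nonneg hy hsa), ← mul_add]
    congr 2
    rcases le_total (ev (M.S a) (σE n) ω) (ev (M.S b) (σE n) ω) with h | h
    · rw [max_eq_left (sub_nonneg.2 h), sub_add_cancel, max_eq_right h]
    · rw [max_eq_right (sub_nonpos.2 h), zero_add, max_eq_left h]
  have hparity : ∀ n, M.EX i j (σE n) + ENNReal.ofReal (M.S0 i)
      = M.EX j i (σE n) + ENNReal.ofReal (M.S0 j) := by
    intro n
    rw [hhalf i j n, hhalf j i n]
    exact lintegral_congr fun ω => by rw [max_comm]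
  -- the truncated times are admissible exercise times
  have hAX : ∀ n, M.EX i j (σE n) ≤ M.AX i j T := by
    intro n
    calc M.EX i j (σE n) ≤ ⨆ (_ : ∀ ω, σE n ω ≤ T ω), M.EX i j (σE n) :=
          le_iSup (fun _ => M.EX i j (σE n)) (hσET n)
      _ ≤ ⨆ (_ : IsExtStoppingTime F (σE n)) (_ : ∀ ω, σE n ω ≤ T ω), M.EX i j (σE n) :=
          le_iSup (fun _ : IsExtStoppingTime F (σE n) =>
            ⨆ (_ : ∀ ω, σE n ω ≤ T ω), M.EX i j (σE n)) (hσE_st n)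
      _ ≤ M.AX i j T :=
          le_iSup (fun τ' => ⨆ (_ : IsExtStoppingTime F τ') (_ : ∀ ω, τ' ω ≤ T ω),
            M.EX i j τ') (σE n)
  -- lower bound for the European value at the truncated times
  have hlow : ∀ n, ∫⁻ ω in B n,
      ENNReal.ofReal (ev M.Y τ ω * max (ev (M.S i) τ ω - ev (M.S j) τ ω) 0) ∂P
        ≤ M.EX j i (σE n) := by
    intro n
    have hcongr : ∫⁻ ω in B n,
        ENNReal.ofReal (ev M.Y τ ω * max (ev (M.S i) τ ω - ev (M.S j) τ ω) 0) ∂P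
        = ∫⁻ ω in B n, ENNReal.ofReal (ev M.Y (σE n) ω
            * max (ev (M.S i) (σE n) ω - ev (M.S j) (σE n) ω) 0) ∂P := by
      refine lintegral_congr_ae ((ae_restrict_mem (hBm n)).mono fun ω hω => ?_)
      have hmin : σE n ω = τ ω := min_eq_left (le_of_lt hω)
      simp only [ev, hmin]
    rw [hcongr]
    exact lintegral_mono' (Measure.restrict_mono (hBsubA n) le_rfl) le_rfl
  have hBmono : Monotone B := fun a b hab ω hω =>
    lt_of_lt_of_le hω (ENNReal.coe_le_coe.2 (M.ζn_mono ω hab))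
  have hBU : ⋃ n, B n = {ω | τ ω < M.ζ ω} := by
    ext ω
    simp only [mem_iUnion, hB_def, mem_setOf_eq]
    rw [M.zeta_eq ω, lt_iSup_iff]
  have hEXτ : M.EX j i τ = ⨆ n, ∫⁻ ω in B n,
      ENNReal.ofReal (ev M.Y τ ω * max (ev (M.S i) τ ω - ev (M.S j) τ ω) 0) ∂P := by
    have hEX : M.EX j i τ = ∫⁻ ω in {ω | τ ω < M.ζ ω},
        ENNReal.ofReal (ev M.Y τ ω * max (ev (M.S i) τ ω - ev (M.S j) τ ω) 0) ∂P := rfl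
    rw [hEX, ← hBU, lintegral_iUnion_mono' P _ hBmono]
  rw [hEXτ, ENNReal.iSup_add]
  refine iSup_le fun n => ?_
  calc (∫⁻ ω in B n,
      ENNReal.ofReal (ev M.Y τ ω * max (ev (M.S i) τ ω - ev (M.S j) τ ω) 0) ∂P)
        + ENNReal.ofReal (M.S0 j)
      ≤ M.EX j i (σE n) + ENNReal.ofReal (M.S0 j) := add_le_add_left (hlow n) _
    _ = M.EX i j (σE n) + ENNReal.ofReal (M.S0 i) := (hparity n).symm
    _ ≤ M.AX i j T + ENNReal.ofReal (M.S0 i) := add_le_add_left (hAX n) _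


end ModelLemmas


/-- American put-call parity: for `Q^i, Q^j` satisfying the valuation
identities, for every stopping time `T`, `AX^{ij}(T) + S^i_0 = AX^{ji}(T) + S^j_0`. -/
theorem stmt17 {Ω ι : Type*} {m : MeasurableSpace Ω} {F : Filtration ℝ≥0 m} {P : Measure Ω}
    (M : Model ι F P) (i j : ι) (Qi Qj : Measure Ω)
    (hQi : M.ValId i Qi) (hQj : M.ValId j Qj)
    (T : Ω → ℝ≥0∞) (hT : IsExtStoppingTime F T) :
    M.AX i j T + ENNReal.ofReal (M.S0 i) = M.AX j i T + ENNReal.ofReal (M.S0 j) := by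
  have main : ∀ i' j' : ι, M.AX j' i' T + ENNReal.ofReal (M.S0 j')
      ≤ M.AX i' j' T + ENNReal.ofReal (M.S0 i') := by
    intro i' j'
    set X := M.AX i' j' T + ENNReal.ofReal (M.S0 i') with hX
    have hkey : ∀ (τ : Ω → ℝ≥0∞), IsExtStoppingTime F τ → (∀ ω, τ ω ≤ T ω) →
        M.EX j' i' τ + ENNReal.ofReal (M.S0 j') ≤ X := fun τ h1 h2 => M.key i' j' h1 h2
    have hcj : ENNReal.ofReal (M.S0 j') ≤ X :=
      le_trans le_add_self (hkey T hT fun ω => le_rfl)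
    have hsup : M.AX j' i' T ≤ X - ENNReal.ofReal (M.S0 j') := by
      refine iSup_le fun τ' => iSup_le fun h1 => iSup_le fun h2 => ?_
      exact ENNReal.le_sub_of_add_le_right ENNReal.ofReal_ne_top (hkey τ' h1 h2)
    calc M.AX j' i' T + ENNReal.ofReal (M.S0 j')
        ≤ (X - ENNReal.ofReal (M.S0 j')) + ENNReal.ofReal (M.S0 j') :=
          add_le_add_left hsup _
      _ = X := tsub_add_cancel_of_le hcj
  exact le_antisymm (main j i) (main i j)

end ExchangeOptions
end
end

section
/- Fix i ∈ I and let Q^i be a probability satisfying the valuation identity for asset i. Then for every stopping time T, the value of the American contract paying the asset itself satisfies sup over stopping times τ with 0 ≤ τ ≤ T of E_P[Y_τ S^i_τ ; τ < ζ] = S^i_0; in particular one has S^i_0 Q^i[τ < ζ] = E_P[Y_τ S^i_τ ; τ < ζ] for each such τ, and Q^i[ζ > 0] = 1. -/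
open MeasureTheory Filter Set
open scoped NNReal ENNReal

noncomputable section

namespace ExchangeOptions

variable {Ω : Type*} {m : MeasurableSpace Ω}

variable {ι : Type*} {F : Filtration ℝ≥0 m} {P : Measure Ω}

/-- If `Q^i` satisfies the valuation identity for asset `i`, then for
every stopping time `T` the American contract paying the asset itself has value
`sup_{τ ≤ T} E_P[Y_τ S^i_τ ; τ < ζ] = S^i_0`; in particular
`S^i_0 Q^i[τ < ζ] = E_P[Y_τ S^i_τ ; τ < ζ]` for each stopping time `τ ≤ T`, and
`Q^i[ζ > 0] = 1`. -/
theorem stmt19 {Ω ι : Type*} {m : MeasurableSpace Ω} {F : Filtration ℝ≥0 m} {P : Measure Ω}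
    (M : Model ι F P) (i : ι) (Qi : Measure Ω) (hQi : M.ValId i Qi)
    (T : Ω → ℝ≥0∞) (hT : IsExtStoppingTime F T) :
    (⨆ (τ : Ω → ℝ≥0∞) (_ : IsExtStoppingTime F τ) (_ : ∀ ω, τ ω ≤ T ω),
        ∫⁻ ω in {ω | τ ω < M.ζ ω}, ENNReal.ofReal (ev M.Y τ ω * ev (M.S i) τ ω) ∂P)
      = ENNReal.ofReal (M.S0 i) ∧
    (∀ (τ : Ω → ℝ≥0∞), IsExtStoppingTime F τ → (∀ ω, τ ω ≤ T ω) →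
      ENNReal.ofReal (M.S0 i) * Qi {ω | τ ω < M.ζ ω}
        = ∫⁻ ω in {ω | τ ω < M.ζ ω}, ENNReal.ofReal (ev M.Y τ ω * ev (M.S i) τ ω) ∂P) ∧
    Qi {ω | 0 < M.ζ ω} = 1 := by

  haveI hPprob : IsProbabilityMeasure P := M.hP
  haveI hQprob : IsProbabilityMeasure Qi := hQi.1
  -- the zero stopping time
  have hzero : IsExtStoppingTime F (fun _ => (0 : ℝ≥0∞)) := by
    intro t
    have : {ω : Ω | (0 : ℝ≥0∞) ≤ (t : ℝ≥0∞)} = Set.univ := by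
      ext ω; simp
    simpa [this] using MeasurableSet.univ
  -- valuation identity with ξ = 1
  have hval : ∀ (τ : Ω → ℝ≥0∞), IsExtStoppingTime F τ →
      ∫⁻ ω in {ω | τ ω < M.ζ ω}, ENNReal.ofReal (ev M.Y τ ω * ev (M.S i) τ ω) ∂P
        = ENNReal.ofReal (M.S0 i) * Qi {ω | τ ω < M.ζ ω} := by
    intro τ hτ
    have h := hQi.2 τ hτ (fun _ => (1 : ℝ≥0∞)) measurable_const
    simpa [lintegral_one, Measure.restrict_apply_univ] using h
  -- a.e. properties at time 0 under P
  have hae : ∀ᵐ ω ∂P, M.S i 0 ω = M.S0 i ∧ M.Y 0 ω = 1 ∧ (0 : ℝ≥0∞) < M.ζ ω := by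
    filter_upwards [M.S0_eq i, M.Y0] with ω hS hY
    refine ⟨hS, hY, ?_⟩
    by_contra h
    have hle : M.ζ ω ≤ ((0 : ℝ≥0) : ℝ≥0∞) := by
      simpa using not_lt.mp h
    have := M.S_default i 0 ω hle
    rw [hS] at this
    exact absurd this.symm (ne_of_lt (M.S0_pos i))
  -- the key computation: value of the contract stopped at 0
  have key : ∫⁻ ω in {ω | (fun _ => (0 : ℝ≥0∞)) ω < M.ζ ω},
      ENNReal.ofReal (ev M.Y (fun _ => 0) ω * ev (M.S i) (fun _ => 0) ω) ∂P
        = ENNReal.ofReal (M.S0 i) := by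
    have hset : {ω | (fun _ => (0 : ℝ≥0∞)) ω < M.ζ ω} =ᵐ[P] (Set.univ : Set Ω) := by
      rw [Filter.eventuallyEq_univ]
      filter_upwards [hae] with ω h
      exact h.2.2
    rw [Measure.restrict_congr_set hset, Measure.restrict_univ]
    have : ∫⁻ ω, ENNReal.ofReal (ev M.Y (fun _ => 0) ω * ev (M.S i) (fun _ => 0) ω) ∂P
        = ∫⁻ _, ENNReal.ofReal (M.S0 i) ∂P := by
      refine lintegral_congr_ae ?_
      filter_upwards [hae] with ω h
      simp [ev, h.1, h.2.1]
    rw [this, lintegral_const, measure_univ, mul_one]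
  have hQ1 : Qi {ω | (fun _ => (0 : ℝ≥0∞)) ω < M.ζ ω} = 1 := by
    have h := (hval _ hzero).symm.trans key
    have hS0 : ENNReal.ofReal (M.S0 i) ≠ 0 := by
      simp [ENNReal.ofReal_eq_zero, not_le, M.S0_pos i]
    have hS0' : ENNReal.ofReal (M.S0 i) ≠ ⊤ := ENNReal.ofReal_ne_top
    have h' : ENNReal.ofReal (M.S0 i) * Qi {ω | (fun _ => (0 : ℝ≥0∞)) ω < M.ζ ω}
        = ENNReal.ofReal (M.S0 i) * 1 := by rw [mul_one]; exact h
    exact (ENNReal.mul_right_inj hS0 hS0').mp h'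
  refine ⟨?_, fun τ hτ _ => (hval τ hτ).symm, by simpa using hQ1⟩
  apply le_antisymm
  · refine iSup_le fun τ => iSup_le fun hτ => iSup_le fun _ => ?_
    rw [hval τ hτ]
    calc ENNReal.ofReal (M.S0 i) * Qi {ω | τ ω < M.ζ ω}
        ≤ ENNReal.ofReal (M.S0 i) * 1 :=
          mul_le_mul_right prob_le_one _
      _ = ENNReal.ofReal (M.S0 i) := mul_one _
  · refine le_iSup_of_le (fun _ => (0 : ℝ≥0∞)) ?_
    rw [iSup_pos hzero, iSup_pos (fun ω => (zero_le : 0 ≤ T ω))]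
    exact key.ge

end ExchangeOptions
end
end
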